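/- arXiv:2304.01281 — 6 statements merged into one kernel-verified Lean document; each statement's English description precedes it below -/
import Mathlib

section
/- Let G be a graph with maximum degree d ≥ 2 and girth at least 2r−1, and let x be an eigenvector of the adjacency matrix of G with ℓ2-norm 1, corresponding to an eigenvalue μ with |μ| ≥ 2√(d−1). Then the ℓ∞-norm of x is at most 1/√r. -/
open scoped RealInnerProductSpace
open Matrix

noncomputable def matEig {n : ℕ} (A : Matrix (Fin n) (Fin n) ℝ) (hA : A.IsHermitian) (k : ℕ) : ℝ :=
  if h : k < n then ((hA.eigenvalues ∘ Tuple.sort hA.eigenvalues) (Fin.rev ⟨k, h⟩)) else 0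

lemma adj_isHermitian {V : Type*} [Fintype V] [DecidableEq V] (G : SimpleGraph V)
    [DecidableRel G.Adj] :
    ((G.adjMatrix ℝ).submatrix (Fintype.equivFin V).symm (Fintype.equivFin V).symm).IsHermitian := by
  ext i j
  simp [Matrix.conjTranspose_apply, SimpleGraph.adjMatrix_apply, SimpleGraph.adj_comm]

/-- The `k`-th largest adjacency eigenvalue of a finite simple graph (`k = 0` is the largest). -/
noncomputable def adjEig {V : Type*} [Fintype V] [DecidableEq V] (G : SimpleGraph V) (k : ℕ) : ℝ :=
  letI := Classical.decRel G.Adj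
  matEig ((G.adjMatrix ℝ).submatrix (Fintype.equivFin V).symm (Fintype.equivFin V).symm)
    (adj_isHermitian G) k

open SimpleGraph Finset

section Aux

variable {V : Type*} [DecidableEq V] {G : SimpleGraph V}

/-- From two distinct paths between the same endpoints, extract a cycle of length at most
the sum of the lengths. -/
lemma cycle_of_two_paths {a b : V} (p q : G.Walk a b) (hp : p.IsPath) (hq : q.IsPath)
    (hne : p ≠ q) :
    ∃ (c : V) (w : G.Walk c c), w.IsCycle ∧ w.length ≤ p.length + q.length := by
  classical
  set E : Set (Sym2 V) := {e | e ∈ p.edges ∨ e ∈ q.edges} with hE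
  set H : SimpleGraph V := SimpleGraph.fromEdgeSet E with hH
  have hle : H ≤ G := by
    rw [hH]
    intro u v huv
    rw [SimpleGraph.fromEdgeSet_adj] at huv
    rcases huv.1 with h | h
    · exact (G.mem_edgeSet).mp (p.edges_subset_edgeSet h)
    · exact (G.mem_edgeSet).mp (q.edges_subset_edgeSet h)
  have hedge : ∀ (u w : V) (r : G.Walk u w), (∀ e ∈ r.edges, e ∈ E) →
      ∀ e ∈ r.edges, e ∈ H.edgeSet := by
    intro u w r hr e he
    rw [hH, SimpleGraph.edgeSet_fromEdgeSet]
    exact ⟨hr e he, G.not_isDiag_of_mem_edgeSet (r.edges_subset_edgeSet he)⟩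
  have hpe : ∀ e ∈ p.edges, e ∈ H.edgeSet := hedge _ _ p (fun e he => Or.inl he)
  have hqe : ∀ e ∈ q.edges, e ∈ H.edgeSet := hedge _ _ q (fun e he => Or.inr he)
  have hnac : ¬ H.IsAcyclic := by
    intro hac
    apply hne
    have := hac.path_unique ⟨p.transfer H hpe, hp.transfer hpe⟩ ⟨q.transfer H hqe, hq.transfer hqe⟩
    have h2 : p.transfer H hpe = q.transfer H hqe := congrArg Subtype.val this
    have h3 := congrArg (fun w : H.Walk a b =>
      w.transfer G (fun e he => SimpleGraph.edgeSet_mono hle (w.edges_subset_edgeSet he))) h2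
    simpa only [SimpleGraph.Walk.transfer_transfer, SimpleGraph.Walk.transfer_self] using h3
  rw [SimpleGraph.IsAcyclic] at hnac
  push_neg at hnac
  obtain ⟨c, w, hw⟩ := hnac
  refine ⟨c, w.mapLe hle, hw.mapLe hle, ?_⟩
  have hlen : (w.mapLe hle).length = w.length := by simp [SimpleGraph.Walk.mapLe]
  rw [hlen]
  have hnd : w.edges.Nodup := hw.edges_nodup
  have hsub : w.edges.toFinset ⊆ (p.edges ++ q.edges).toFinset := by
    intro e he
    rw [List.mem_toFinset] at he
    have := w.edges_subset_edgeSet he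
    rw [hH, SimpleGraph.edgeSet_fromEdgeSet] at this
    rw [List.mem_toFinset, List.mem_append]
    exact this.1
  calc w.length = w.edges.length := (w.length_edges).symm
    _ = w.edges.toFinset.card := (List.toFinset_card_of_nodup hnd).symm
    _ ≤ (p.edges ++ q.edges).toFinset.card := Finset.card_le_card hsub
    _ ≤ (p.edges ++ q.edges).length := List.toFinset_card_le _
    _ = p.length + q.length := by simp

/-- every vertex on a walk from `a` is within `edist` at most the length. -/
lemma edist_le_of_mem_support {a b w : V} (p : G.Walk a b) (hw : w ∈ p.support) :
    G.edist a w ≤ p.length := by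
  have := SimpleGraph.edist_le (p.takeUntil w hw)
  exact this.trans (by exact_mod_cast Nat.cast_le.mpr (p.length_takeUntil_le hw))

/-- existence of a parent. -/
lemma exists_parent {i u : V} {s : ℕ} (h : G.edist i u = (s + 1 : ℕ)) :
    ∃ v, G.Adj v u ∧ G.edist i v = s := by
  obtain ⟨p, hp⟩ := SimpleGraph.exists_walk_of_edist_eq_coe h
  rcases pr : p.reverse with _ | @⟨_, v, _, hadj, q⟩
  · have : p.length = 0 := by
      have := congrArg SimpleGraph.Walk.length pr
      simpa using this
    omega
  · have hql : q.length = s := by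
      have := congrArg SimpleGraph.Walk.length pr
      simp at this
      omega
    refine ⟨v, hadj.symm, ?_⟩
    have h1 : G.edist i v ≤ s := by
      have := SimpleGraph.edist_le q.reverse
      simpa [hql] using this
    have h2 : (s : ℕ∞) ≤ G.edist i v := by
      have htri := G.edist_triangle (u := i) (v := v) (w := u)
      have hvu : G.edist v u ≤ 1 := le_of_eq (SimpleGraph.edist_eq_one_iff_adj.mpr hadj.symm)
      have hkey : ((s : ℕ∞) + 1) ≤ G.edist i v + 1 := by
        calc ((s : ℕ∞) + 1) = ((s + 1 : ℕ) : ℕ∞) := by push_cast; ring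
          _ = G.edist i u := h.symm
          _ ≤ G.edist i v + G.edist v u := htri
          _ ≤ G.edist i v + 1 := add_le_add le_rfl hvu
      exact (ENat.add_le_add_iff_right (by simp)).mp hkey
    exact le_antisymm h1 h2

/-- adjacency changes edist by at most one. -/
lemma edist_le_edist_add_one {i u v : V} (h : G.Adj u v) :
    G.edist i v ≤ G.edist i u + 1 := by
  have htri := G.edist_triangle (u := i) (v := u) (w := v)
  have huv : G.edist u v ≤ 1 := le_of_eq (SimpleGraph.edist_eq_one_iff_adj.mpr h)
  exact htri.trans (add_le_add le_rfl huv)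

/-- a shortest walk, realized as a path of length `edist`. -/
lemma exists_path_length_edist {i v : V} {t : ℕ} (h : G.edist i v = t) :
    ∃ p : G.Walk i v, p.IsPath ∧ p.length = t := by
  obtain ⟨p, hp⟩ := SimpleGraph.exists_walk_of_edist_eq_coe h
  refine ⟨p.bypass, p.bypass_isPath, le_antisymm ?_ ?_⟩
  · exact le_trans p.length_bypass_le (le_of_eq hp)
  · have := SimpleGraph.edist_le p.bypass
    rw [h] at this
    exact_mod_cast this

/-- uniqueness of the parent under a girth assumption. -/
lemma unique_parent {i u v₁ v₂ : V} {s L : ℕ}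
    (hcyc : ∀ (c : V) (w : G.Walk c c), w.IsCycle → L ≤ w.length)
    (hL : 2 * s + 2 < L)
    (hu : G.edist i u = (s + 1 : ℕ))
    (h1 : G.Adj v₁ u) (e1 : G.edist i v₁ = s)
    (h2 : G.Adj v₂ u) (e2 : G.edist i v₂ = s) : v₁ = v₂ := by
  by_contra hne
  obtain ⟨p₁, hp₁, hl₁⟩ := exists_path_length_edist e1
  obtain ⟨p₂, hp₂, hl₂⟩ := exists_path_length_edist e2
  have hnotmem : ∀ (w : V) (p : G.Walk i w), p.length = s → u ∉ p.support := by
    intro w p hl hmem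
    have := edist_le_of_mem_support p hmem
    rw [hu, hl] at this
    exact_mod_cast Nat.not_succ_le_self s (by exact_mod_cast this)
  have hP₁ : (p₁.concat h1).IsPath := by
    rw [SimpleGraph.Walk.isPath_def, SimpleGraph.Walk.support_concat,
      List.nodup_append']
    refine ⟨hp₁.support_nodup, List.nodup_singleton u, ?_⟩
    intro a ha hb
    rw [List.mem_singleton] at hb
    subst hb
    exact hnotmem _ p₁ hl₁ ha
  have hP₂ : (p₂.concat h2).IsPath := by
    rw [SimpleGraph.Walk.isPath_def, SimpleGraph.Walk.support_concat,
      List.nodup_append']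
    refine ⟨hp₂.support_nodup, List.nodup_singleton u, ?_⟩
    intro a ha hb
    rw [List.mem_singleton] at hb
    subst hb
    exact hnotmem _ p₂ hl₂ ha
  have hne' : p₁.concat h1 ≠ p₂.concat h2 := by
    intro hEq
    obtain ⟨hv, -⟩ := SimpleGraph.Walk.concat_inj hEq
    exact hne hv
  obtain ⟨c, w, hw, hwl⟩ := cycle_of_two_paths _ _ hP₁ hP₂ hne'
  have := hcyc c w hw
  rw [SimpleGraph.Walk.length_concat, SimpleGraph.Walk.length_concat, hl₁, hl₂] at hwl
  omega

/-- no edges within a sphere of radius `t` when the girth is more than `2t+1`. -/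
lemma no_intra_edge {i u v : V} {t L : ℕ}
    (hcyc : ∀ (c : V) (w : G.Walk c c), w.IsCycle → L ≤ w.length)
    (hL : 2 * t + 1 < L)
    (hu : G.edist i u = t) (hv : G.edist i v = t) : ¬ G.Adj u v := by
  intro hadj
  have hne : u ≠ v := hadj.ne
  obtain ⟨pu, hpu, hlu⟩ := exists_path_length_edist hu
  obtain ⟨pv, hpv, hlv⟩ := exists_path_length_edist hv
  have hnot : u ∉ pv.support := by
    intro hmem
    have hsplit := pv.take_spec hmem
    have hlen : (pv.takeUntil u hmem).length + (pv.dropUntil u hmem).length = t := by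
      have := congrArg SimpleGraph.Walk.length hsplit
      rw [SimpleGraph.Walk.length_append] at this
      omega
    have h1 : G.edist i u ≤ (pv.takeUntil u hmem).length := SimpleGraph.edist_le _
    have h2 : G.edist u v ≤ (pv.dropUntil u hmem).length := SimpleGraph.edist_le _
    have h3 : (1 : ℕ∞) ≤ G.edist u v := by
      have := G.edist_pos_of_ne hne
      exact Order.one_le_iff_pos.mpr this
    have h4 : ((t : ℕ∞) + 1) ≤ (t : ℕ∞) := by
      calc ((t : ℕ∞) + 1) ≤ G.edist i u + G.edist u v := by
            rw [hu]; exact add_le_add le_rfl h3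
        _ ≤ ((pv.takeUntil u hmem).length : ℕ∞) + ((pv.dropUntil u hmem).length : ℕ∞) :=
            add_le_add h1 h2
        _ = ((t : ℕ)) := by exact_mod_cast congrArg Nat.cast hlen
    have : (t : ℕ∞) + 1 ≠ (t : ℕ∞) + 0 := by
      intro hEq
      have := (WithTop.add_left_cancel (by simp : (t : ℕ∞) ≠ ⊤)) hEq
      exact (one_ne_zero : (1 : ℕ∞) ≠ 0) this
    simp only [add_zero] at this
    exact this (le_antisymm h4 le_self_add)
  have hQ : (pv.concat hadj.symm).IsPath := by
    rw [SimpleGraph.Walk.isPath_def, SimpleGraph.Walk.support_concat,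
      List.nodup_append']
    refine ⟨hpv.support_nodup, List.nodup_singleton u, ?_⟩
    intro a ha hb
    rw [List.mem_singleton] at hb
    subst hb
    exact hnot ha
  have hne' : pu ≠ pv.concat hadj.symm := by
    intro hEq
    have := congrArg SimpleGraph.Walk.length hEq
    rw [SimpleGraph.Walk.length_concat, hlu, hlv] at this
    omega
  obtain ⟨c, w, hw, hwl⟩ := cycle_of_two_paths _ _ hpu hQ hne'
  have := hcyc c w hw
  rw [SimpleGraph.Walk.length_concat, hlu, hlv] at hwl
  omega

end Aux

set_option maxHeartbeats 4000000 in
/-- delocalization of eigenvectors of high-girth bounded degree graphs: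
if `G` has maximum degree `d ≥ 2` and girth at least `2r-1`, and `x` is a unit eigenvector
for an eigenvalue `μ` with `|μ| ≥ 2√(d-1)`, then `‖x‖_∞ ≤ 1/√r`. -/
theorem eigenvector_delocalization
    (n d r : ℕ) (hd : 2 ≤ d) (hr : 1 ≤ r)
    (G : SimpleGraph (Fin n)) [DecidableRel G.Adj]
    (hdeg : G.maxDegree ≤ d)
    (hgirth : ((2 * r - 1 : ℕ) : ℕ∞) ≤ G.girth)
    (μ : ℝ) (x : Fin n → ℝ)
    (hx : ∑ i, x i ^ 2 = 1)
    (heig : G.adjMatrix ℝ *ᵥ x = μ • x)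
    (hμ : 2 * Real.sqrt (d - 1) ≤ |μ|) :
    ∀ i, |x i| ≤ 1 / Real.sqrt r := by
  classical
  intro i
  by_cases hxi : x i = 0
  · rw [hxi, abs_zero]
    positivity
  -- girth unfolding
  have hcyc : ∀ (c : Fin n) (w : G.Walk c c), w.IsCycle → 2 * r - 1 ≤ w.length := by
    intro c w hw
    have hnac : ¬ G.IsAcyclic := fun hac => hac w hw
    have hne : G.egirth ≠ ⊤ := fun h => hnac (SimpleGraph.egirth_eq_top.mp h)
    have hg2 : ((2 * r - 1 : ℕ) : ℕ∞) ≤ G.egirth := by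
      have : ((G.girth : ℕ) : ℕ∞) = G.egirth := by
        rw [SimpleGraph.girth, ENat.coe_toNat hne]
      rw [← this]
      exact_mod_cast hgirth
    have := SimpleGraph.le_egirth.mp hg2 c w hw
    exact_mod_cast this
  -- spheres
  set S : ℕ → Finset (Fin n) := fun t => Finset.univ.filter (fun v => G.edist i v = (t : ℕ∞))
    with hS
  have hmemS : ∀ t (v : Fin n), v ∈ S t ↔ G.edist i v = (t : ℕ∞) := by
    intro t v; simp [hS]
  have hS0 : S 0 = {i} := by
    ext v
    simp only [hmemS, Finset.mem_singleton, Nat.cast_zero, SimpleGraph.edist_eq_zero_iff]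
    exact eq_comm
  set W : ℕ → ℝ := fun t => ∑ v ∈ S t, x v ^ 2 with hW
  set a : ℕ → ℝ := fun t => Real.sqrt (W t) with ha
  have hWnn : ∀ t, 0 ≤ W t := fun t => Finset.sum_nonneg fun v _ => sq_nonneg _
  have hann : ∀ t, 0 ≤ a t := fun t => Real.sqrt_nonneg _
  have hasq : ∀ t, a t ^ 2 = W t := fun t => Real.sq_sqrt (hWnn t)
  have hW0 : W 0 = x i ^ 2 := by simp only [hW, hS0, Finset.sum_singleton]
  have ha0 : 0 < a 0 := by
    rw [ha]
    apply Real.sqrt_pos.mpr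
    rw [hW0]
    positivity
  set U : ℕ → ℝ := fun t => match t with
    | 0 => 0
    | (t+1) => ∑ u ∈ S (t+1), x u * ∑ v ∈ (S t).filter (fun v => G.Adj u v), x v
    with hU
  have hmulvec : ∀ v : Fin n, ∑ u ∈ G.neighborFinset v, x u = μ * x v := by
    intro v
    have := congrFun heig v
    rwa [SimpleGraph.adjMatrix_mulVec_apply, Pi.smul_apply, smul_eq_mul] at this

  -- level classification of neighbors
  have hlev : ∀ t : ℕ, t + 2 ≤ r → ∀ v ∈ S t, ∀ u, G.Adj v u →
      (u ∈ S (t+1) ∨ (1 ≤ t ∧ u ∈ S (t-1))) := by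
    intro t ht v hv u hadj
    have hv' := (hmemS t v).mp hv
    have hle : G.edist i u ≤ (t : ℕ∞) + 1 := by
      have := edist_le_edist_add_one (i := i) hadj
      rwa [hv'] at this
    have hnetop : G.edist i u ≠ ⊤ := by
      intro htop
      rw [htop] at hle
      have h2 := top_le_iff.mp hle
      have h3 : ((t + 1 : ℕ) : ℕ∞) = ⊤ := by push_cast; rw [← h2]
      exact ENat.coe_ne_top _ h3
    set k := (G.edist i u).toNat with hk
    have hk' : G.edist i u = (k : ℕ∞) := (ENat.coe_toNat hnetop).symm
    have hk1 : k ≤ t + 1 := by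
      rw [hk'] at hle
      exact_mod_cast hle
    have hk2 : t ≤ k + 1 := by
      have := edist_le_edist_add_one (i := i) hadj.symm
      rw [hv', hk'] at this
      exact_mod_cast this
    have hkt : k ≠ t := by
      intro hEq
      exact no_intra_edge hcyc (by omega) hk' (hEq ▸ hv') hadj.symm
    have : k = t + 1 ∨ (1 ≤ t ∧ k = t - 1) := by omega
    rcases this with h | ⟨h1, h2⟩
    · exact Or.inl ((hmemS _ u).mpr (by rw [hk', h]))
    · exact Or.inr ⟨h1, (hmemS _ u).mpr (by rw [hk', h2])⟩
  -- the eigenvalue identity on spheres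
  have hF2 : ∀ t : ℕ, t + 2 ≤ r → U t + U (t+1) = μ * W t := by
    intro t ht
    have hsplitN : ∀ v ∈ S t, G.neighborFinset v =
        ((S (t-1)).filter (fun u => G.Adj v u)) ∪ ((S (t+1)).filter (fun u => G.Adj v u)) := by
      intro v hv
      ext u
      simp only [SimpleGraph.mem_neighborFinset, Finset.mem_union, Finset.mem_filter]
      constructor
      · intro hadj
        rcases hlev t ht v hv u hadj with h | ⟨-, h⟩
        · exact Or.inr ⟨h, hadj⟩
        · exact Or.inl ⟨h, hadj⟩
      · rintro (⟨-, h⟩ | ⟨-, h⟩) <;> exact h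
    have hdisj : ∀ v : Fin n, Disjoint ((S (t-1)).filter (fun u => G.Adj v u))
        ((S (t+1)).filter (fun u => G.Adj v u)) := by
      intro v
      apply Finset.disjoint_filter_filter
      rw [Finset.disjoint_left]
      intro w hw1 hw2
      have h1 := (hmemS _ w).mp hw1
      have h2 := (hmemS _ w).mp hw2
      rw [h1] at h2
      have : t - 1 = t + 1 := by exact_mod_cast h2
      omega
    have step1 : μ * W t = ∑ v ∈ S t, ((∑ u ∈ (S (t-1)).filter (fun u => G.Adj v u), x u) * x v
        + (∑ u ∈ (S (t+1)).filter (fun u => G.Adj v u), x u) * x v) := by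
      rw [hW, Finset.mul_sum]
      apply Finset.sum_congr rfl
      intro v hv
      have h1 : μ * x v ^ 2 = (∑ u ∈ G.neighborFinset v, x u) * x v := by
        rw [hmulvec v]; ring
      rw [h1, hsplitN v hv, Finset.sum_union (hdisj v), add_mul]
    rw [step1, Finset.sum_add_distrib]
    have hlow : ∑ v ∈ S t, (∑ u ∈ (S (t-1)).filter (fun u => G.Adj v u), x u) * x v = U t := by
      match t with
      | 0 =>
        rw [hS0]
        rw [Finset.sum_singleton]
        have hemp : Finset.filter (fun u => G.Adj i u) ({i} : Finset (Fin n)) = ∅ := by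
          ext w
          simp only [Finset.mem_filter, Finset.mem_singleton, Finset.notMem_empty,
            iff_false, not_and]
          rintro rfl
          exact fun h => G.irrefl h
        rw [hemp]
        simp [hU]
      | (s+1) =>
        show _ = ∑ u ∈ S (s+1), x u * ∑ v ∈ (S s).filter (fun v => G.Adj u v), x v
        apply Finset.sum_congr rfl
        intro v hv
        exact mul_comm _ _
    have hhigh : ∑ v ∈ S t, (∑ u ∈ (S (t+1)).filter (fun u => G.Adj v u), x u) * x v
        = U (t+1) := by
      show _ = ∑ u ∈ S (t+1), x u * ∑ v ∈ (S t).filter (fun v => G.Adj u v), x v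
      calc ∑ v ∈ S t, (∑ u ∈ (S (t+1)).filter (fun u => G.Adj v u), x u) * x v
          = ∑ v ∈ S t, ∑ u ∈ S (t+1), (if G.Adj v u then x u * x v else 0) := by
            apply Finset.sum_congr rfl
            intro v hv
            rw [Finset.sum_mul, Finset.sum_filter]
        _ = ∑ u ∈ S (t+1), ∑ v ∈ S t, (if G.Adj v u then x u * x v else 0) := Finset.sum_comm
        _ = ∑ u ∈ S (t+1), x u * ∑ v ∈ (S t).filter (fun v => G.Adj u v), x v := by
            apply Finset.sum_congr rfl
            intro u hu
            have hfil : (S t).filter (fun v => G.Adj u v) = (S t).filter (fun v => G.Adj v u) := by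
              apply Finset.filter_congr
              intro v hv
              exact ⟨fun h => h.symm, fun h => h.symm⟩
            rw [hfil, Finset.mul_sum]
            exact (Finset.sum_filter _ _).symm
    rw [hlow, hhigh]

  -- unique parent as a singleton filter
  have hparent : ∀ t : ℕ, t + 2 ≤ r → ∀ u ∈ S (t+1),
      ∃ v, v ∈ S t ∧ G.Adj u v ∧ (S t).filter (fun v => G.Adj u v) = {v} := by
    intro t ht u hu
    have hu' : G.edist i u = ((t + 1 : ℕ) : ℕ∞) := by exact_mod_cast (hmemS _ u).mp hu
    obtain ⟨v, hadj, hv⟩ := exists_parent hu'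
    refine ⟨v, (hmemS _ v).mpr hv, hadj.symm, ?_⟩
    ext w
    simp only [Finset.mem_filter, Finset.mem_singleton, hmemS]
    constructor
    · rintro ⟨hw1, hw2⟩
      exact unique_parent hcyc (by omega) hu' hw2.symm hw1 hadj hv
    · rintro rfl
      exact ⟨hv, hadj.symm⟩
  -- crude degree bound
  have hcard : ∀ (t : ℕ) (v : Fin n), ((S (t+1)).filter (fun u => G.Adj v u)).card ≤ d := by
    intro t v
    calc ((S (t+1)).filter (fun u => G.Adj v u)).card ≤ (G.neighborFinset v).card := by
          apply Finset.card_le_card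
          intro u hu
          rw [SimpleGraph.mem_neighborFinset]
          exact (Finset.mem_filter.mp hu).2
      _ = G.degree v := G.card_neighborFinset_eq_degree v
      _ ≤ G.maxDegree := G.degree_le_maxDegree v
      _ ≤ d := hdeg
  -- refined degree bound away from the root
  have hcard1 : ∀ t : ℕ, 1 ≤ t → ∀ v ∈ S t,
      ((S (t+1)).filter (fun u => G.Adj v u)).card ≤ d - 1 := by
    intro t ht v hv
    have hv' : G.edist i v = ((t - 1 + 1 : ℕ) : ℕ∞) := by
      have := (hmemS _ v).mp hv
      rw [this]
      congr 1
      omega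
    obtain ⟨z, hzadj, hz⟩ := exists_parent hv'
    have hsub : (S (t+1)).filter (fun u => G.Adj v u) ⊆ (G.neighborFinset v).erase z := by
      intro u hu
      obtain ⟨hu1, hu2⟩ := Finset.mem_filter.mp hu
      rw [Finset.mem_erase, SimpleGraph.mem_neighborFinset]
      refine ⟨?_, hu2⟩
      intro hEq
      have h1 := (hmemS _ u).mp hu1
      rw [hEq, hz] at h1
      have : t - 1 = t + 1 := by exact_mod_cast h1
      omega
    have hdv := G.degree_le_maxDegree v
    calc ((S (t+1)).filter (fun u => G.Adj v u)).card
        ≤ ((G.neighborFinset v).erase z).card := Finset.card_le_card hsub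
      _ = (G.neighborFinset v).card - 1 :=
          Finset.card_erase_of_mem ((G.mem_neighborFinset v z).mpr hzadj.symm)
      _ ≤ d - 1 := by
          rw [G.card_neighborFinset_eq_degree v]
          omega
  -- Cauchy–Schwarz bound for the cross sums
  have hCS : ∀ t : ℕ, t + 2 ≤ r → ∀ c : ℕ,
      (∀ v ∈ S t, ((S (t+1)).filter (fun u => G.Adj v u)).card ≤ c) →
      |U (t+1)| ≤ Real.sqrt c * (a t * a (t+1)) := by
    intro t ht c hc
    have hex : ∀ u : Fin n, u ∈ S (t+1) →
        ∃ v, v ∈ S t ∧ G.Adj u v ∧ (S t).filter (fun v => G.Adj u v) = {v} := hparent t ht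
    set P : Fin n → Fin n := fun u =>
      if h : ∃ v, v ∈ S t ∧ G.Adj u v ∧ (S t).filter (fun v => G.Adj u v) = {v}
      then h.choose else i with hP
    have hPmem : ∀ u ∈ S (t+1), P u ∈ S t ∧ G.Adj u (P u) ∧
        (S t).filter (fun v => G.Adj u v) = {P u} := by
      intro u hu
      have h := hex u hu
      rw [hP]
      simp only [dif_pos h]
      exact h.choose_spec
    have hU1 : U (t+1) = ∑ u ∈ S (t+1), x u * x (P u) := by
      show (∑ u ∈ S (t+1), x u * ∑ v ∈ (S t).filter (fun v => G.Adj u v), x v) = _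
      apply Finset.sum_congr rfl
      intro u hu
      rw [(hPmem u hu).2.2, Finset.sum_singleton]
    have hcs2 : (∑ u ∈ S (t+1), x u * x (P u))^2
        ≤ W (t+1) * (∑ u ∈ S (t+1), x (P u) ^ 2) := by
      have := Finset.sum_mul_sq_le_sq_mul_sq (S (t+1)) (fun u => x u) (fun u => x (P u))
      rw [hW]
      exact this
    have hfib : ∑ u ∈ S (t+1), x (P u) ^ 2 ≤ (c : ℝ) * W t := by
      have hmaps : ∀ u ∈ S (t+1), P u ∈ S t := fun u hu => (hPmem u hu).1
      rw [← Finset.sum_fiberwise_of_maps_to hmaps (fun u => x (P u) ^ 2)]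
      calc ∑ v ∈ S t, ∑ u ∈ (S (t+1)).filter (fun u => P u = v), x (P u) ^ 2
          ≤ ∑ v ∈ S t, (c : ℝ) * x v ^ 2 := by
            apply Finset.sum_le_sum
            intro v hv
            have heq : ∑ u ∈ (S (t+1)).filter (fun u => P u = v), x (P u) ^ 2
                = ((S (t+1)).filter (fun u => P u = v)).card * x v ^ 2 := by
              rw [Finset.sum_congr rfl (fun u hu => by
                rw [(Finset.mem_filter.mp hu).2]), Finset.sum_const, nsmul_eq_mul]
            rw [heq]
            apply mul_le_mul_of_nonneg_right _ (sq_nonneg _)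
            have hsub : (S (t+1)).filter (fun u => P u = v)
                ⊆ (S (t+1)).filter (fun u => G.Adj v u) := by
              intro u hu
              obtain ⟨hu1, hu2⟩ := Finset.mem_filter.mp hu
              exact Finset.mem_filter.mpr ⟨hu1, by rw [← hu2]; exact (hPmem u hu1).2.1.symm⟩
            exact_mod_cast Nat.cast_le.mpr (le_trans (Finset.card_le_card hsub) (hc v hv))
        _ = (c : ℝ) * W t := by rw [hW, Finset.mul_sum]
    have habs : |U (t+1)| ≤ Real.sqrt (W (t+1) * ((c : ℝ) * W t)) := by
      rw [hU1]
      have h1 : (∑ u ∈ S (t+1), x u * x (P u))^2 ≤ W (t+1) * ((c : ℝ) * W t) :=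
        le_trans hcs2 (mul_le_mul_of_nonneg_left hfib (hWnn _))
      calc |∑ u ∈ S (t+1), x u * x (P u)|
          = Real.sqrt ((∑ u ∈ S (t+1), x u * x (P u))^2) := (Real.sqrt_sq_eq_abs _).symm
        _ ≤ _ := Real.sqrt_le_sqrt h1
    refine habs.trans (le_of_eq ?_)
    rw [Real.sqrt_mul (hWnn _), Real.sqrt_mul (Nat.cast_nonneg c)]
    have h1 : Real.sqrt (W (t+1)) = a (t+1) := rfl
    have h2 : Real.sqrt (W t) = a t := rfl
    rw [h1, h2]
    ring

  -- numerical setup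
  set q : ℝ := Real.sqrt ((d : ℝ) - 1) with hqdef
  have hdR : (2:ℝ) ≤ (d:ℝ) := by exact_mod_cast hd
  have hd1 : (1 : ℝ) ≤ (d : ℝ) - 1 := by linarith
  have hq1 : 1 ≤ q := by
    have h := Real.sqrt_le_sqrt hd1
    rwa [Real.sqrt_one] at h
  have hq0 : 0 < q := lt_of_lt_of_le one_pos hq1
  have hqsq : q ^ 2 = (d:ℝ) - 1 := Real.sq_sqrt (by linarith)
  have hsd0 : 0 < Real.sqrt (d:ℝ) := Real.sqrt_pos.mpr (by linarith)
  have hsdsq : Real.sqrt (d:ℝ) ^ 2 = (d:ℝ) := Real.sq_sqrt (by linarith)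
  have h2q : Real.sqrt (d:ℝ) ≤ 2 * q := by
    nlinarith [hqsq, hsdsq, hq0, hsd0, hdR]
  have hqc : Real.sqrt ((d - 1 : ℕ) : ℝ) = q := by
    rw [hqdef]
    congr 1
    rw [Nat.cast_sub (by omega), Nat.cast_one]
  have hU0 : U 0 = 0 := rfl
  have hmu2q : 2 * q ≤ |μ| := hμ
  have habsU : ∀ t, t + 2 ≤ r → |μ| * W t - |U t| ≤ |U (t+1)| := by
    intro t ht
    have h1 := hF2 t ht
    have h2 : U (t+1) = μ * W t - U t := by linarith
    calc |μ| * W t - |U t| = |μ * W t| - |U t| := by rw [abs_mul, abs_of_nonneg (hWnn t)]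
      _ ≤ |μ * W t - U t| := abs_sub_abs_le_abs_sub _ _
      _ = |U (t+1)| := by rw [← h2]
  have hbase : 2 ≤ r → 2 * q * a 0 ^ 2 ≤ Real.sqrt (d:ℝ) * (a 0 * a 1) := by
    intro hr2
    have h1 := habsU 0 (by omega)
    rw [hU0, abs_zero, sub_zero] at h1
    have h2 := hCS 0 (by omega) d (fun v _ => hcard 0 v)
    have h3 : 2 * q * W 0 ≤ |μ| * W 0 := mul_le_mul_of_nonneg_right hmu2q (hWnn 0)
    have h4 : W 0 = a 0 ^ 2 := (hasq 0).symm
    nlinarith [h1, h2, h3, h4]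
  have ha1pos : 2 ≤ r → 0 < a 1 := by
    intro hr2
    have hb := hbase hr2
    nlinarith [ha0, hq0, hsd0, hann 1, mul_pos hsd0 ha0,
      mul_pos (mul_pos two_pos hq0) (mul_pos ha0 ha0)]
  have key : ∀ t : ℕ, t + 2 ≤ r → (a t ≤ a (t + 1) ∧ 0 < a (t + 1)) := by
    intro t
    induction t using Nat.strong_induction_on with
    | _ t ih =>
      intro ht
      obtain _ | _ | s := t
      · -- t = 0
        refine ⟨?_, ha1pos (by omega)⟩
        have h1 := hbase (by omega)
        have h2 : Real.sqrt (d:ℝ) * (a 0 * a 0) ≤ Real.sqrt (d:ℝ) * (a 0 * a 1) := by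
          nlinarith [h1, mul_nonneg (sub_nonneg.mpr h2q) (sq_nonneg (a 0))]
        exact le_of_mul_le_mul_left (le_of_mul_le_mul_left h2 hsd0) ha0
      · -- t = 1
        show a 1 ≤ a 2 ∧ 0 < a 2
        have hb := hbase (by omega)
        have ha1 := ha1pos (by omega)
        have hup := habsU 1 (by omega)
        have hU1b := hCS 0 (by omega) d (fun v _ => hcard 0 v)
        have hU2b := hCS 1 (by omega) (d-1) (hcard1 1 (by omega))
        rw [hqc] at hU2b
        have hW1 : W 1 = a 1 ^ 2 := (hasq 1).symm
        have hmuW : 2 * q * W 1 ≤ |μ| * W 1 := mul_le_mul_of_nonneg_right hmu2q (hWnn 1)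
        rw [hW1] at hup hmuW
        have hkey : 2 * q * a 1 ^ 2 - Real.sqrt (d:ℝ) * (a 0 * a 1) ≤ q * (a 1 * a 2) := by
          linarith [hup, hmuW, hU1b, hU2b]
        have hqa1 : Real.sqrt (d:ℝ) * a 0 ≤ q * a 1 := by
          nlinarith [mul_le_mul_of_nonneg_left hb hq0.le, hqsq, hsdsq, hdR,
            mul_pos hsd0 ha0, sq_nonneg (a 0)]
        have h7 : q * (a 1 * a 1) ≤ q * (a 1 * a 2) := by
          nlinarith [hkey, mul_le_mul_of_nonneg_right hqa1 ha1.le]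
        have h8 : a 1 ≤ a 2 := le_of_mul_le_mul_left (le_of_mul_le_mul_left h7 hq0) ha1
        exact ⟨h8, lt_of_lt_of_le ha1 h8⟩
      · -- t = s + 2
        show a (s+2) ≤ a (s+3) ∧ 0 < a (s+3)
        obtain ⟨ih1, ihpos⟩ := ih (s+1) (by omega) (by omega)
        have hup := habsU (s+2) (by omega)
        have hUa := hCS (s+1) (by omega) (d-1) (hcard1 (s+1) (by omega))
        have hUb := hCS (s+2) (by omega) (d-1) (hcard1 (s+2) (by omega))
        rw [hqc] at hUa hUb
        have hWs : W (s+2) = a (s+2) ^ 2 := (hasq _).symm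
        have hmuW : 2 * q * W (s+2) ≤ |μ| * W (s+2) :=
          mul_le_mul_of_nonneg_right hmu2q (hWnn _)
        rw [hWs] at hup hmuW
        have hkey : 2 * q * a (s+2) ^ 2 - q * (a (s+1) * a (s+2)) ≤ q * (a (s+2) * a (s+3)) := by
          linarith [hup, hUa, hUb, hmuW]
        have h7 : q * (a (s+2) * a (s+2)) ≤ q * (a (s+2) * a (s+3)) := by
          nlinarith [hkey, mul_le_mul_of_nonneg_right (mul_le_mul_of_nonneg_left ih1 hq0.le)
            ihpos.le]
        have h8 : a (s+2) ≤ a (s+3) := le_of_mul_le_mul_left (le_of_mul_le_mul_left h7 hq0) ihpos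
        exact ⟨h8, lt_of_lt_of_le ihpos h8⟩
  -- monotonicity from the root
  have hmono0 : ∀ t, t ≤ r - 1 → a 0 ≤ a t := by
    intro t
    induction t with
    | zero => intro _; exact le_rfl
    | succ t iht =>
      intro ht
      exact le_trans (iht (by omega)) (key t (by omega)).1
  have hWge : ∀ t, t ≤ r - 1 → x i ^ 2 ≤ W t := by
    intro t ht
    have h1 : a 0 ^ 2 ≤ a t ^ 2 := by
      have := hmono0 t ht
      nlinarith [hann 0, hann t]
    rw [hasq, hasq, hW0] at h1
    exact h1
  -- summation over the spheres
  have hdisjS : ∀ t ∈ Finset.range r, ∀ s ∈ Finset.range r, t ≠ s → Disjoint (S t) (S s) := by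
    intro t _ s _ hts
    rw [Finset.disjoint_left]
    intro v hv1 hv2
    have h1 := (hmemS _ v).mp hv1
    have h2 := (hmemS _ v).mp hv2
    rw [h1] at h2
    exact hts (by exact_mod_cast h2)
  have hsum : (r : ℝ) * x i ^ 2 ≤ 1 := by
    calc (r : ℝ) * x i ^ 2 = ∑ _t ∈ Finset.range r, x i ^ 2 := by
          rw [Finset.sum_const, Finset.card_range, nsmul_eq_mul]
      _ ≤ ∑ t ∈ Finset.range r, W t := by
          apply Finset.sum_le_sum
          intro t ht
          exact hWge t (by have := Finset.mem_range.mp ht; omega)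
      _ = ∑ v ∈ (Finset.range r).biUnion S, x v ^ 2 := (Finset.sum_biUnion hdisjS).symm
      _ ≤ ∑ v, x v ^ 2 := Finset.sum_le_sum_of_subset_of_nonneg
          (Finset.subset_univ _) (fun v _ _ => sq_nonneg _)
      _ = 1 := hx
  -- conclusion
  have hr0 : (0:ℝ) < (r:ℝ) := by exact_mod_cast hr
  have hfin : x i ^ 2 ≤ 1 / (r:ℝ) := by
    rw [le_div_iff₀ hr0]
    linarith [hsum]
  calc |x i| = Real.sqrt (x i ^ 2) := (Real.sqrt_sq_eq_abs _).symm
    _ ≤ Real.sqrt (1 / (r:ℝ)) := Real.sqrt_le_sqrt hfin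
    _ = 1 / Real.sqrt (r:ℝ) := by
        rw [one_div, Real.sqrt_inv, one_div]
end

section
/- Let G be a d-regular graph on n vertices whose vertex set is partitioned into two equal halves B and C such that the number of edges with both endpoints in B plus the number with both endpoints in C is at most m. Then the smallest adjacency eigenvalue of G satisfies λ_n(G) ≤ −d + 4m/n. -/
open scoped RealInnerProductSpace
open Matrix

lemma matEig_congr {n : ℕ} {A B : Matrix (Fin n) (Fin n) ℝ} (h : A = B)
    (hA : A.IsHermitian) (hB : B.IsHermitian) (k : ℕ) :
    matEig A hA k = matEig B hB k := by subst h; rfl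

lemma matEig_min_le_eigenvalues {n : ℕ} (hn : 0 < n) (A : Matrix (Fin n) (Fin n) ℝ)
    (hA : A.IsHermitian) (i : Fin n) :
    matEig A hA (n - 1) ≤ hA.eigenvalues i := by
  have h : n - 1 < n := Nat.sub_lt hn one_pos
  rw [matEig, dif_pos h]
  have h0 : Fin.rev ⟨n - 1, h⟩ = ⟨0, hn⟩ := by
    ext; simp [Fin.rev]; omega
  rw [h0]
  have hmono := Tuple.monotone_sort hA.eigenvalues
    (a := (⟨0, hn⟩ : Fin n)) (b := (Tuple.sort hA.eigenvalues).symm i)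
    (by rw [Fin.le_def]; exact Nat.zero_le _)
  simpa using hmono

lemma matEig_rayleigh {n : ℕ} (hn : 0 < n) (A : Matrix (Fin n) (Fin n) ℝ)
    (hA : A.IsHermitian) (x : Fin n → ℝ) :
    matEig A hA (n - 1) * (x ⬝ᵥ x) ≤ x ⬝ᵥ A *ᵥ x := by
  set c := matEig A hA (n - 1) with hc
  have hpsd : (A - c • 1).PosSemidef := by
    set U : Matrix (Fin n) (Fin n) ℝ := (hA.eigenvectorUnitary : Matrix (Fin n) (Fin n) ℝ) with hU
    have hUU : U * star U = 1 := Matrix.mem_unitaryGroup_iff.mp hA.eigenvectorUnitary.2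
    have key : A - c • 1 = U * diagonal (fun i => hA.eigenvalues i - c) * star U := by
      have h1 : (c • (1 : Matrix (Fin n) (Fin n) ℝ)) = U * (c • 1) * star U := by
        rw [Matrix.mul_smul, mul_one, Matrix.smul_mul, hUU]
      conv_lhs => rw [hA.spectral_theorem, Unitary.conjStarAlgAut_apply, h1]
      rw [← hU]
      rw [← Matrix.sub_mul, ← Matrix.mul_sub]
      rw [smul_one_eq_diagonal, diagonal_sub]
      rfl
    rw [key]
    exact (Matrix.posSemidef_diagonal_iff.mpr fun i =>
      sub_nonneg.mpr (matEig_min_le_eigenvalues hn A hA i)).mul_mul_conjTranspose_same U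
  have h2 := hpsd.dotProduct_mulVec_nonneg x
  simp only [star_trivial, Matrix.sub_mulVec, dotProduct_sub, Matrix.smul_mulVec,
    Matrix.one_mulVec, dotProduct_smul, smul_eq_mul] at h2
  linarith

/-- subgraph consisting of the edges inside a set `S` -/
def inside {n : ℕ} (G : SimpleGraph (Fin n)) (S : Set (Fin n)) : SimpleGraph (Fin n) where
  Adj u v := G.Adj u v ∧ u ∈ S ∧ v ∈ S
  symm := ⟨fun u v h => ⟨h.1.symm, h.2.2, h.2.1⟩⟩
  loopless := ⟨fun u h => G.loopless.irrefl u h.1⟩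

@[simp] lemma inside_adj {n : ℕ} (G : SimpleGraph (Fin n)) (S : Set (Fin n)) (u v : Fin n) :
    (inside G S).Adj u v ↔ G.Adj u v ∧ u ∈ S ∧ v ∈ S := Iff.rfl

lemma inside_edgeSet {n : ℕ} (G : SimpleGraph (Fin n)) (S : Set (Fin n)) :
    (inside G S).edgeSet = {e ∈ G.edgeSet | ∃ a ∈ S, ∃ b ∈ S, e = s(a, b)} := by
  ext e
  induction e with
  | _ u v =>
    simp only [SimpleGraph.mem_edgeSet, Set.mem_setOf_eq, inside_adj]
    constructor
    · rintro ⟨h, hu, hv⟩; exact ⟨h, u, hu, v, hv, rfl⟩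
    · rintro ⟨h, a, ha, b, hb, hab⟩
      rw [Sym2.eq_iff] at hab
      rcases hab with ⟨rfl, rfl⟩ | ⟨rfl, rfl⟩
      · exact ⟨h, ha, hb⟩
      · exact ⟨h, hb, ha⟩

lemma inside_sum {n : ℕ} (G : SimpleGraph (Fin n)) (S : Set (Fin n))
    [DecidableRel (inside G S).Adj] [Fintype (inside G S).edgeSet] :
    ∑ u : Fin n, ∑ v : Fin n, (if (inside G S).Adj u v then (1:ℝ) else 0)
      = 2 * ({e ∈ G.edgeSet | ∃ a ∈ S, ∃ b ∈ S, e = s(a, b)}.ncard : ℝ) := by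
  have h1 : ∀ u : Fin n, ∑ v : Fin n, (if (inside G S).Adj u v then (1:ℝ) else 0)
      = ((inside G S).degree u : ℝ) := by
    intro u
    rw [SimpleGraph.degree, SimpleGraph.neighborFinset_eq_filter, Finset.sum_boole]
  simp_rw [h1]
  rw [← Nat.cast_sum, SimpleGraph.sum_degrees_eq_twice_card_edges,
    ← inside_edgeSet G S, ← SimpleGraph.coe_edgeFinset, Set.ncard_coe_finset]
  push_cast
  ring_nf
  congr!

/-- if a `d`-regular graph on `n` vertices has a balanced bipartition `B, Bᶜ`
with at most `m` non-crossing edges, then `λ_n(G) ≤ -d + 4m/n`. -/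
theorem few_internal_edges_smallest_eigenvalue
    (n d m : ℕ) (hn : 0 < n)
    (G : SimpleGraph (Fin n)) [DecidableRel G.Adj]
    (hreg : G.IsRegularOfDegree d)
    (B : Set (Fin n)) (hB : 2 * B.ncard = n)
    (hm : {e ∈ G.edgeSet | ∃ a ∈ B, ∃ b ∈ B, e = s(a, b)}.ncard +
          {e ∈ G.edgeSet | ∃ a ∈ Bᶜ, ∃ b ∈ Bᶜ, e = s(a, b)}.ncard ≤ m) :
    adjEig G (n - 1) ≤ -(d : ℝ) + 4 * m / n := by
  classical
  have hN : Fintype.card (Fin n) = n := Fintype.card_fin n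
  have hn2 : 0 < Fintype.card (Fin n) := by omega
  set e := (Fintype.equivFin (Fin n)).symm with he
  set M := (G.adjMatrix ℝ).submatrix e e with hMdef
  have hM : M.IsHermitian := adj_isHermitian G
  -- bridge from `adjEig` (classical instance) to `M`
  have hb : adjEig G (n - 1) = matEig M hM (n - 1) := by
    unfold adjEig
    refine matEig_congr ?_ _ _ _
    ext i j
    by_cases h : G.Adj (e i) (e j) <;> simp [hMdef, Matrix.submatrix_apply, SimpleGraph.adjMatrix, h, he]
  -- the test vector
  set y : Fin n → ℝ := fun u => if u ∈ B then 1 else -1 with hy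
  have hyy : ∀ u, y u * y u = 1 := by
    intro u; by_cases h : u ∈ B <;> simp [hy, h]
  have hray := matEig_rayleigh hn2 M hM (fun i => y (e i))
  rw [congrArg (matEig M hM) (show Fintype.card (Fin n) - 1 = n - 1 by omega)] at hray
  have hxx : (fun i => y (e i)) ⬝ᵥ (fun i => y (e i)) = (n : ℝ) := by
    simp [dotProduct, hyy]
  -- quadratic form
  have hquad : (fun i => y (e i)) ⬝ᵥ M *ᵥ (fun i => y (e i))
      = ∑ u, ∑ v, (G.adjMatrix ℝ) u v * (y u * y v) := by
    calc (fun i => y (e i)) ⬝ᵥ M *ᵥ (fun i => y (e i))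
        = ∑ i, ∑ j, (G.adjMatrix ℝ) (e i) (e j) * (y (e i) * y (e j)) := by
          simp only [dotProduct, Matrix.mulVec, hMdef, Matrix.submatrix_apply, Finset.mul_sum,
            dotProduct]
          exact Finset.sum_congr rfl fun i _ => Finset.sum_congr rfl fun j _ => by ring
      _ = ∑ u, ∑ v, (G.adjMatrix ℝ) u v * (y u * y v) := by
          rw [← Equiv.sum_comp e (fun u => ∑ v, (G.adjMatrix ℝ) u v * (y u * y v))]
          exact Finset.sum_congr rfl fun i _ =>
            Equiv.sum_comp e (fun v => (G.adjMatrix ℝ) (e i) v * (y (e i) * y v))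
  haveI hd1 : DecidableRel (inside G B).Adj := Classical.decRel _
  haveI hd2 : DecidableRel (inside G Bᶜ).Adj := Classical.decRel _
  -- pointwise identity
  have hpt : ∀ u v, (G.adjMatrix ℝ) u v * (y u * y v) =
      2 * ((if (inside G B).Adj u v then (1:ℝ) else 0)
        + (if (inside G Bᶜ).Adj u v then (1:ℝ) else 0)) - (G.adjMatrix ℝ) u v := by
    intro u v
    by_cases h : G.Adj u v
    · by_cases hu : u ∈ B <;> by_cases hv : v ∈ B <;>
        simp [h, hu, hv, hy] <;> ring
    · simp [h]
  -- row sums of the adjacency matrix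
  have hrow : ∀ u, ∑ v, (G.adjMatrix ℝ) u v = (d : ℝ) := by
    intro u
    simp only [SimpleGraph.adjMatrix_apply]
    rw [Finset.sum_boole, ← SimpleGraph.neighborFinset_eq_filter,
      show (G.neighborFinset u).card = G.degree u from rfl, hreg u]
  have hsum : ∑ u : Fin n, ∑ v : Fin n, (G.adjMatrix ℝ) u v = (n : ℝ) * d := by
    rw [Finset.sum_congr rfl fun u _ => hrow u]
    simp [mul_comm]
  have hquad2 : ∑ u, ∑ v, (G.adjMatrix ℝ) u v * (y u * y v)
      = 2 * ((∑ u : Fin n, ∑ v : Fin n, (if (inside G B).Adj u v then (1:ℝ) else 0))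
        + (∑ u : Fin n, ∑ v : Fin n, (if (inside G Bᶜ).Adj u v then (1:ℝ) else 0)))
        - ∑ u : Fin n, ∑ v : Fin n, (G.adjMatrix ℝ) u v := by
    simp only [hpt, Finset.sum_sub_distrib, Finset.sum_add_distrib, ← Finset.mul_sum]
  rw [inside_sum G B, inside_sum G Bᶜ, hsum] at hquad2
  -- put everything together
  set cB := {e ∈ G.edgeSet | ∃ a ∈ B, ∃ b ∈ B, e = s(a, b)}.ncard with hcB
  set cC := {e ∈ G.edgeSet | ∃ a ∈ Bᶜ, ∃ b ∈ Bᶜ, e = s(a, b)}.ncard with hcC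
  have hmR : (cB : ℝ) + cC ≤ (m : ℝ) := by exact_mod_cast hm
  rw [hxx, hquad, hquad2] at hray
  rw [hb]
  have hn' : (0 : ℝ) < n := by exact_mod_cast hn
  rw [show -(d:ℝ) + 4 * m / n = (4 * m - n * d) / n by field_simp; ring,
    le_div_iff₀ hn']
  nlinarith [hray]
end

section
/- Fix d ≥ 3 and λ > 2√(d−1). Define a_i(λ) = (α^{i+1} − β^{i+1})/(α − β), where α = (λ + √(λ²−4(d−1)))/2 and β = (λ − √(λ²−4(d−1)))/2. Let G be a graph containing a vertex v such that some connected component of G ∖ {v} is a complete (d−1)-ary tree T with ℓ+1 levels whose root is the unique neighbor of v in T. If λ is an eigenvalue of G with eigenvector w, then w is radial on T (vertices at equal distance from the root have equal entries), and if the leaves of T carry value x, then vertices of T at distance ℓ−i from the root carry value a_i(λ)·x for every 0 ≤ i ≤ ℓ. -/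
open scoped RealInnerProductSpace
open Matrix

/-- radial structure of eigenvectors on a pendant complete `(d-1)`-ary tree.
`X i` is the set of vertices of the tree `T` at distance `i` from its root; the root is the
unique neighbor of `v` in `T`, the tree is a connected component of `G \ {v}`, every non-leaf
vertex has `d-1` children and all leaves are at distance `ℓ` from the root.  If `λ > 2√(d-1)`
is an eigenvalue of `G` with eigenvector `w`, then `w` is radial on `T`, and if the leaves
carry value `x` then vertices at distance `ℓ - i` from the root carry value `a_i(λ)·x`. -/
theorem pendant_tree_eigenvector_radial
    {W : Type*} [Fintype W] [DecidableEq W]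
    (G : SimpleGraph W) [DecidableRel G.Adj]
    (d ℓ : ℕ) (hd : 3 ≤ d)
    (lam : ℝ) (hlam : 2 * Real.sqrt (d - 1) < lam)
    (a : ℕ → ℝ)
    (ha : ∀ i, a i =
      (((lam + Real.sqrt (lam ^ 2 - 4 * (d - 1))) / 2) ^ (i + 1) -
        ((lam - Real.sqrt (lam ^ 2 - 4 * (d - 1))) / 2) ^ (i + 1)) /
        Real.sqrt (lam ^ 2 - 4 * (d - 1)))
    (v root : W) (X : ℕ → Finset W)
    (hX0 : X 0 = {root})
    (hdisj : ∀ i j, i ≤ ℓ → j ≤ ℓ → i ≠ j → Disjoint (X i) (X j))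
    (hvnotT : ∀ i, i ≤ ℓ → v ∉ X i)
    (hvroot : G.Adj v root)
    (hvonly : ∀ i, i ≤ ℓ → ∀ u ∈ X i, u ≠ root → ¬ G.Adj v u)
    (hchild : ∀ i, i < ℓ → ∀ u ∈ X i, ((X (i + 1)).filter (fun w' => G.Adj u w')).card = d - 1)
    (hparent : ∀ i, 1 ≤ i → i ≤ ℓ → ∀ u ∈ X i, ∃! p, p ∈ X (i - 1) ∧ G.Adj u p)
    (hroot_nbrs : ∀ u' , G.Adj root u' → u' = v ∨ u' ∈ X 1)
    (hnbrs : ∀ i, 1 ≤ i → i ≤ ℓ → ∀ u ∈ X i, ∀ w', G.Adj u w' →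
        w' ∈ X (i - 1) ∪ X (i + 1))
    (hXtop : X (ℓ + 1) = ∅)
    (w : W → ℝ) (hw : w ≠ 0)
    (heig : G.adjMatrix ℝ *ᵥ w = lam • w) :
    (∀ i, i ≤ ℓ → ∀ u₁ ∈ X i, ∀ u₂ ∈ X i, w u₁ = w u₂) ∧
    (∀ x : ℝ, (∀ u ∈ X ℓ, w u = x) →
      ∀ i, i ≤ ℓ → ∀ u ∈ X (ℓ - i), w u = a i * x) := by
  have hd1 : (2:ℝ) ≤ (d:ℝ) - 1 := by
    have : (3:ℝ) ≤ (d:ℝ) := by exact_mod_cast hd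
    linarith
  have hsq0 : (0:ℝ) ≤ 2 * Real.sqrt ((d:ℝ) - 1) := by positivity
  have hlam0 : 0 < lam := lt_of_le_of_lt hsq0 hlam
  have hD : 0 < lam ^ 2 - 4 * ((d:ℝ) - 1) := by
    have h1 : Real.sqrt ((d:ℝ) - 1) ^ 2 = (d:ℝ) - 1 := Real.sq_sqrt (by linarith)
    nlinarith [hlam, hsq0]
  set s := Real.sqrt (lam ^ 2 - 4 * ((d:ℝ) - 1)) with hs_def
  have hs2 : s ^ 2 = lam ^ 2 - 4 * ((d:ℝ) - 1) := Real.sq_sqrt hD.le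
  have hspos : 0 < s := Real.sqrt_pos.2 hD
  have hslam : s < lam := by nlinarith [hs2, hspos, hlam0, hd1]
  set A := (lam + s) / 2 with hA_def
  set B := (lam - s) / 2 with hB_def
  have hBpos : 0 < B := by rw [hB_def]; linarith
  have hBA : B < A := by rw [hA_def, hB_def]; linarith
  have ha0 : a 0 = 1 := by
    rw [ha 0, pow_one, pow_one, hA_def, hB_def]
    field_simp
    ring
  have ha1 : a 1 = lam := by
    rw [ha 1, hA_def, hB_def]
    field_simp
    ring
  have hA2 : A ^ 2 = lam * A - ((d:ℝ) - 1) := by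
    rw [hA_def]; linear_combination hs2 / 4
  have hB2 : B ^ 2 = lam * B - ((d:ℝ) - 1) := by
    rw [hB_def]; linear_combination hs2 / 4
  have harec : ∀ j, a (j + 2) = lam * a (j + 1) - ((d:ℝ) - 1) * a j := by
    intro j
    rw [ha (j + 2), ha (j + 1), ha j]
    have eA : A ^ (j + 2 + 1) = lam * A ^ (j + 1 + 1) - ((d:ℝ) - 1) * A ^ (j + 1) := by
      have h : A ^ (j + 2 + 1) = A ^ (j + 1) * A ^ 2 := by ring
      rw [h, hA2]; ring
    have eB : B ^ (j + 2 + 1) = lam * B ^ (j + 1 + 1) - ((d:ℝ) - 1) * B ^ (j + 1) := by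
      have h : B ^ (j + 2 + 1) = B ^ (j + 1) * B ^ 2 := by ring
      rw [h, hB2]; ring
    rw [eA, eB]; ring
  have hapos : ∀ j, 0 < a j := by
    intro j
    rw [ha j]
    apply div_pos _ hspos
    have h : B ^ (j + 1) < A ^ (j + 1) := pow_lt_pow_left₀ hBA hBpos.le (by omega)
    linarith
  -- eigenvector equation
  have heqn : ∀ u : W, ∑ u' ∈ G.neighborFinset u, w u' = lam * w u := by
    intro u
    have h := congrFun heig u
    rw [SimpleGraph.adjMatrix_mulVec_apply] at h
    simpa using h
  -- sum over neighbors of a tree vertex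
  have hsum : ∀ i, 1 ≤ i → i ≤ ℓ → ∀ u ∈ X i, ∀ p ∈ X (i - 1), G.Adj u p →
      lam * w u = w p + ∑ c ∈ (X (i + 1)).filter (fun w' => G.Adj u w'), w c := by
    intro i hi1 hil u hu p hp hadj
    have heq : G.neighborFinset u = insert p ((X (i + 1)).filter (fun w' => G.Adj u w')) := by
      ext w'
      simp only [SimpleGraph.mem_neighborFinset, Finset.mem_insert, Finset.mem_filter]
      constructor
      · intro h
        rcases Finset.mem_union.1 (hnbrs i hi1 hil u hu w' h) with h1 | h2
        · left
          obtain ⟨q, hq, huniq⟩ := hparent i hi1 hil u hu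
          rw [huniq w' ⟨h1, h⟩, huniq p ⟨hp, hadj⟩]
        · exact Or.inr ⟨h2, h⟩
      · rintro (rfl | ⟨h1, h2⟩)
        · exact hadj
        · exact h2
    have hpnot : p ∉ (X (i + 1)).filter (fun w' => G.Adj u w') := by
      intro hmem
      have hmem1 := (Finset.mem_filter.1 hmem).1
      rcases lt_or_eq_of_le hil with hlt | rfl
      · exact (Finset.disjoint_left.1
          (hdisj (i - 1) (i + 1) (by omega) (by omega) (by omega)) hp) hmem1
      · rw [hXtop] at hmem1; simp at hmem1
    have h := heqn u
    rw [heq, Finset.sum_insert hpnot] at h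
    linarith
  -- key lemma: relation between a vertex and its parent
  have KEY : ∀ j i, i ≤ ℓ → ℓ - i = j → 1 ≤ i → ∀ u ∈ X i, ∀ p ∈ X (i - 1), G.Adj u p →
      a (j + 1) * w u = a j * w p := by
    intro j
    induction j with
    | zero =>
      intro i hil hji hi1 u hu p hp hadj
      have hieq : i = ℓ := by omega
      subst hieq
      have h := hsum i hi1 hil u hu p hp hadj
      have hempty : (X (i + 1)).filter (fun w' => G.Adj u w') = ∅ := by
        rw [hXtop]; rfl
      rw [hempty, Finset.sum_empty] at h
      rw [ha1, ha0]
      linarith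
    | succ j ih =>
      intro i hil hji hi1 u hu p hp hadj
      have hilt : i < ℓ := by omega
      have h := hsum i hi1 hil u hu p hp hadj
      set F := (X (i + 1)).filter (fun w' => G.Adj u w') with hF_def
      have hterm : ∀ c ∈ F, a (j + 1) * w c = a j * w u := by
        intro c hc
        have hc1 := (Finset.mem_filter.1 hc).1
        have hc2 := (Finset.mem_filter.1 hc).2
        exact ih (i + 1) (by omega) (by omega) (by omega) c hc1 u hu hc2.symm
      have hcard : F.card = d - 1 := hchild i hilt u hu
      have hS : a (j + 1) * ∑ c ∈ F, w c = ((d:ℝ) - 1) * (a j * w u) := by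
        rw [Finset.mul_sum, Finset.sum_congr rfl hterm, Finset.sum_const, hcard,
          nsmul_eq_mul, Nat.cast_sub (by omega), Nat.cast_one]
      calc a (j + 1 + 1) * w u
          = (lam * a (j + 1) - ((d:ℝ) - 1) * a j) * w u := by rw [show j+1+1 = j+2 from rfl, harec j]
        _ = a (j + 1) * (lam * w u) - ((d:ℝ) - 1) * (a j * w u) := by ring
        _ = a (j + 1) * (w p + ∑ c ∈ F, w c) - a (j + 1) * ∑ c ∈ F, w c := by rw [h, hS]
        _ = a (j + 1) * w p := by ring
  constructor
  · intro i
    induction i with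
    | zero =>
      intro _ u₁ h₁ u₂ h₂
      rw [hX0, Finset.mem_singleton] at h₁ h₂
      rw [h₁, h₂]
    | succ i ih =>
      intro hle u₁ h₁ u₂ h₂
      obtain ⟨p₁, ⟨hp₁, hadj₁⟩, _⟩ := hparent (i + 1) (by omega) hle u₁ h₁
      obtain ⟨p₂, ⟨hp₂, hadj₂⟩, _⟩ := hparent (i + 1) (by omega) hle u₂ h₂
      have k₁ := KEY (ℓ - (i + 1)) (i + 1) hle rfl (by omega) u₁ h₁ p₁ hp₁ hadj₁
      have k₂ := KEY (ℓ - (i + 1)) (i + 1) hle rfl (by omega) u₂ h₂ p₂ hp₂ hadj₂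
      have hpw : w p₁ = w p₂ := ih (by omega) p₁ hp₁ p₂ hp₂
      have hpos := hapos (ℓ - (i + 1) + 1)
      apply mul_left_cancel₀ hpos.ne'
      rw [k₁, k₂, hpw]
  · intro x hx i
    induction i with
    | zero =>
      intro _ u hu
      rw [Nat.sub_zero] at hu
      rw [hx u hu, ha0, one_mul]
    | succ i ih =>
      intro hle u hu
      have hm : ℓ - (i + 1) < ℓ := by omega
      have hcard := hchild (ℓ - (i + 1)) hm u hu
      have hne : ((X (ℓ - (i + 1) + 1)).filter (fun w' => G.Adj u w')).Nonempty := by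
        rw [← Finset.card_pos, hcard]; omega
      obtain ⟨c, hc⟩ := hne
      have hc1 := (Finset.mem_filter.1 hc).1
      have hc2 := (Finset.mem_filter.1 hc).2
      have hstep : ℓ - (i + 1) + 1 = ℓ - i := by omega
      rw [hstep] at hc1
      have hu' : u ∈ X (ℓ - i - 1) := by
        rw [Nat.sub_sub]; exact hu
      have k := KEY i (ℓ - i) (by omega) (by omega) (by omega) c hc1 u hu' hc2.symm
      have hwc : w c = a i * x := ih (by omega) c hc1
      rw [hwc] at k
      apply mul_left_cancel₀ (hapos i).ne'
      rw [← k]; ring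
end

section
/- Fix integers d ≥ 3, s ≥ 1, ℓ ≥ 2 and a connected graph G'. Let G be the graph obtained from G' by attaching to every vertex of G' exactly s disjoint (d−1)-ary trees with ℓ levels, joining each such tree's root by an edge to that vertex. Then for every real λ > 2√(d−1): λ is an eigenvalue of G if and only if λ − s·a_{ℓ−1}(λ)/a_ℓ(λ) is an eigenvalue of G', where a_i(λ) is the Chebyshev-like sequence a_0 = 1, a_1 = λ, a_{i+1} = λ a_i − (d−1) a_{i−1}. -/
open scoped RealInnerProductSpace
open Matrix

lemma mulVec_eq_smul_iff' {V : Type*} [Fintype V] [DecidableEq V] (G : SimpleGraph V)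
    [DecidableRel G.Adj] (x : V → ℝ) (c : ℝ) :
    G.adjMatrix ℝ *ᵥ x = c • x ↔ ∀ v, ∑ u ∈ G.neighborFinset v, x u = c * x v := by
  constructor
  · intro h v
    have := congrFun h v
    rwa [SimpleGraph.adjMatrix_mulVec_apply, Pi.smul_apply, smul_eq_mul] at this
  · intro h
    funext v
    rw [SimpleGraph.adjMatrix_mulVec_apply, Pi.smul_apply, smul_eq_mul]
    exact h v

/-- eigenvalue correspondence for the tree augmentation `G = T_s^ℓ(d) G'`,
obtained from `G'` by attaching `s` disjoint `(d-1)`-ary trees with `ℓ` levels to each vertex.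
For `λ > 2√(d-1)`: `λ` is an eigenvalue of `G` iff `λ - s·a_{ℓ-1}(λ)/a_ℓ(λ)` is an
eigenvalue of `G'`. -/
theorem tree_augmentation_eigenvalue_correspondence
    {V W : Type*} [Fintype V] [DecidableEq V] [Fintype W] [DecidableEq W]
    (d s ℓ : ℕ) (hd : 3 ≤ d) (hs : 1 ≤ s) (hℓ : 2 ≤ ℓ)
    (G' : SimpleGraph V) [DecidableRel G'.Adj] (hG'c : G'.Connected)
    (Gbig : SimpleGraph W) [DecidableRel Gbig.Adj]
    (ι : V ↪ W) (X : ℕ → Finset W)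
    (hX0 : ∀ w : W, w ∈ X 0 ↔ ∃ a : V, ι a = w)
    (hcover : ∀ w : W, ∃ i ≤ ℓ, w ∈ X i)
    (hdisj : ∀ i j, i ≤ ℓ → j ≤ ℓ → i ≠ j → Disjoint (X i) (X j))
    (hbase : ∀ a b : V, Gbig.Adj (ι a) (ι b) ↔ G'.Adj a b)
    (hbase_nbrs : ∀ (a : V) (w : W), Gbig.Adj (ι a) w → (∃ b : V, ι b = w) ∨ w ∈ X 1)
    (hroots : ∀ a : V, ((X 1).filter (fun w => Gbig.Adj (ι a) w)).card = s)
    (hchild : ∀ i, 1 ≤ i → i < ℓ → ∀ u ∈ X i,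
        ((X (i + 1)).filter (fun w => Gbig.Adj u w)).card = d - 1)
    (hparent : ∀ i, 1 ≤ i → i ≤ ℓ → ∀ u ∈ X i, ∃! p, p ∈ X (i - 1) ∧ Gbig.Adj u p)
    (hnbrs : ∀ i, 1 ≤ i → i ≤ ℓ → ∀ u ∈ X i, ∀ w, Gbig.Adj u w → w ∈ X (i - 1) ∪ X (i + 1))
    (hXtop : X (ℓ + 1) = ∅)
    (a : ℕ → ℝ → ℝ)
    (ha0 : ∀ lam, a 0 lam = 1) (ha1 : ∀ lam, a 1 lam = lam)
    (harec : ∀ i lam, a (i + 2) lam = lam * a (i + 1) lam - (d - 1) * a i lam) :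
    ∀ lam : ℝ, 2 * Real.sqrt (d - 1) < lam →
      ((∃ x : W → ℝ, x ≠ 0 ∧ Gbig.adjMatrix ℝ *ᵥ x = lam • x) ↔
        (∃ y : V → ℝ, y ≠ 0 ∧
          G'.adjMatrix ℝ *ᵥ y = (lam - s * a (ℓ - 1) lam / a ℓ lam) • y)) := by
  intro lam hlam
  classical
  -- numeric facts
  have hd3 : (3:ℝ) ≤ (d:ℝ) := by exact_mod_cast hd
  have hdR : (1:ℝ) ≤ (d:ℝ) - 1 := by linarith
  have hdnn : (0:ℝ) ≤ (d:ℝ) - 1 := by linarith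
  set q : ℝ := Real.sqrt ((d:ℝ) - 1) with hqdef
  have hqq : q * q = (d:ℝ) - 1 := Real.mul_self_sqrt hdnn
  have hq1 : 1 ≤ q := by nlinarith [Real.sqrt_nonneg ((d:ℝ) - 1)]
  have hq0 : 0 < q := by linarith
  have hlam0 : 0 < lam := by linarith
  -- positivity of the sequence a
  have hpos : ∀ i, 0 < a i lam ∧ q * a i lam < a (i+1) lam := by
    intro i
    induction i with
    | zero =>
      constructor
      · rw [ha0]; norm_num
      · rw [ha0, ha1]; nlinarith
    | succ n ih =>
      obtain ⟨h1, h2⟩ := ih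
      have h3 : 0 < a (n+1) lam := lt_trans (by positivity) h2
      refine ⟨h3, ?_⟩
      rw [harec]
      nlinarith [mul_lt_mul_of_pos_left h2 hq0, mul_lt_mul_of_pos_right hlam h3]
  have hapos : ∀ i, 0 < a i lam := fun i => (hpos i).1
  have hane : ∀ i, a i lam ≠ 0 := fun i => ne_of_gt (hapos i)
  -- level function
  choose lvl hlvl_le hlvl_mem using hcover
  have hlvl_eq : ∀ w i, i ≤ ℓ → w ∈ X i → lvl w = i := by
    intro w i hi hw
    by_contra h
    exact (Finset.disjoint_left.mp (hdisj _ _ (hlvl_le w) hi h)) (hlvl_mem w) hw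
  -- parent function
  have hpar_exu : ∀ w, 1 ≤ lvl w → ∃! p, p ∈ X (lvl w - 1) ∧ Gbig.Adj w p :=
    fun w h => hparent (lvl w) h (hlvl_le w) w (hlvl_mem w)
  have hpar_ex : ∀ w, ∃ p, 1 ≤ lvl w → (p ∈ X (lvl w - 1) ∧ Gbig.Adj w p) := by
    intro w
    by_cases h : 1 ≤ lvl w
    · obtain ⟨p, hp, -⟩ := hpar_exu w h
      exact ⟨p, fun _ => hp⟩
    · exact ⟨w, fun hh => absurd hh h⟩
  choose par hpar using hpar_ex
  have hpar_uniq : ∀ w, 1 ≤ lvl w → ∀ p, p ∈ X (lvl w - 1) → Gbig.Adj w p → p = par w := by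
    intro w h p h1 h2
    exact (hpar_exu w h).unique ⟨h1, h2⟩ ⟨(hpar w h).1, (hpar w h).2⟩
  have hlvl_par : ∀ w, 1 ≤ lvl w → lvl (par w) = lvl w - 1 := by
    intro w h
    exact hlvl_eq _ _ (by have := hlvl_le w; omega) (hpar w h).1
  -- ground ancestor
  have hground : ∀ k w, lvl w = k → par^[k] w ∈ X 0 := by
    intro k
    induction k with
    | zero =>
      intro w h
      rw [Function.iterate_zero_apply, ← h]
      exact hlvl_mem w
    | succ n ih =>
      intro w h
      rw [Function.iterate_succ_apply]
      refine ih (par w) ?_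
      have := hlvl_par w (by omega)
      omega
  have hbase_ex : ∀ w, ∃ v : V, ι v = par^[lvl w] w := fun w => (hX0 _).mp (hground _ w rfl)
  choose bse hbse using hbase_ex
  have hlvl_iota : ∀ v : V, lvl (ι v) = 0 :=
    fun v => hlvl_eq _ 0 (by omega) ((hX0 _).mpr ⟨v, rfl⟩)
  have hbse_iota : ∀ v : V, bse (ι v) = v := by
    intro v
    apply ι.injective
    rw [hbse, hlvl_iota, Function.iterate_zero_apply]
  have hbse_par : ∀ w, 1 ≤ lvl w → bse w = bse (par w) := by
    intro w h
    apply ι.injective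
    rw [hbse, hbse]
    have h1 : lvl w = lvl (par w) + 1 := by have := hlvl_par w h; omega
    rw [h1, Function.iterate_succ_apply]
  -- neighborhood decomposition at base vertices
  have hN0 : ∀ v : V, Gbig.neighborFinset (ι v) =
      (G'.neighborFinset v).image ι ∪ (X 1).filter (fun w => Gbig.Adj (ι v) w) := by
    intro v
    ext w
    simp only [SimpleGraph.mem_neighborFinset, Finset.mem_union, Finset.mem_image,
      Finset.mem_filter]
    constructor
    · intro hadj
      rcases hbase_nbrs v w hadj with ⟨b, hb⟩ | h1
      · subst hb
        exact Or.inl ⟨b, (hbase v b).mp hadj, rfl⟩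
      · exact Or.inr ⟨h1, hadj⟩
    · rintro (⟨b, hb, rfl⟩ | ⟨-, hadj⟩)
      · exact (hbase v b).mpr hb
      · exact hadj
  have hdisj01 : ∀ v : V, Disjoint ((G'.neighborFinset v).image ι)
      ((X 1).filter (fun w => Gbig.Adj (ι v) w)) := by
    intro v
    rw [Finset.disjoint_left]
    rintro w hw hw2
    obtain ⟨b, -, rfl⟩ := Finset.mem_image.mp hw
    exact Finset.disjoint_left.mp (hdisj 0 1 (by omega) (by omega) (by omega))
      ((hX0 _).mpr ⟨b, rfl⟩) (Finset.mem_filter.mp hw2).1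
  -- neighborhood decomposition at tree vertices
  have hN1 : ∀ w, 1 ≤ lvl w → Gbig.neighborFinset w =
      insert (par w) ((X (lvl w + 1)).filter (fun u => Gbig.Adj w u)) := by
    intro w h
    ext u
    simp only [SimpleGraph.mem_neighborFinset, Finset.mem_insert, Finset.mem_filter]
    constructor
    · intro hadj
      rcases Finset.mem_union.mp (hnbrs (lvl w) h (hlvl_le w) w (hlvl_mem w) u hadj) with h1 | h2
      · exact Or.inl (hpar_uniq w h u h1 hadj)
      · exact Or.inr ⟨h2, hadj⟩
    · rintro (rfl | ⟨-, hadj⟩)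
      · exact (hpar w h).2
      · exact hadj
  have hpar_notin : ∀ w, 1 ≤ lvl w →
      par w ∉ (X (lvl w + 1)).filter (fun u => Gbig.Adj w u) := by
    intro w h hmem
    have h1 := (Finset.mem_filter.mp hmem).1
    have h2 := (hpar w h).1
    by_cases hc : lvl w = ℓ
    · rw [hc, hXtop] at h1
      exact absurd h1 (Finset.notMem_empty _)
    · have := hlvl_le w
      exact Finset.disjoint_left.mp
        (hdisj (lvl w - 1) (lvl w + 1) (by omega) (by omega) (by omega)) h2 h1
  -- facts about children
  have hchild_facts : ∀ w, 1 ≤ lvl w → lvl w < ℓ →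
      ∀ c ∈ (X (lvl w + 1)).filter (fun u => Gbig.Adj w u),
        lvl c = lvl w + 1 ∧ par c = w ∧ bse c = bse w := by
    intro w h hw c hc
    obtain ⟨hc1, hc2⟩ := Finset.mem_filter.mp hc
    have hlc : lvl c = lvl w + 1 := hlvl_eq c _ (by omega) hc1
    have hpc : w = par c := by
      refine hpar_uniq c (by omega) w ?_ hc2.symm
      rw [hlc, Nat.add_sub_cancel]
      exact hlvl_mem w
    refine ⟨hlc, hpc.symm, ?_⟩
    rw [hbse_par c (by omega), ← hpc]
  -- facts about roots
  have hroot_facts : ∀ (v : V), ∀ r ∈ (X 1).filter (fun w => Gbig.Adj (ι v) w),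
      lvl r = 1 ∧ par r = ι v ∧ bse r = v := by
    intro v r hr
    obtain ⟨hr1, hr2⟩ := Finset.mem_filter.mp hr
    have hlr : lvl r = 1 := hlvl_eq r 1 (by omega) hr1
    have hpr : ι v = par r := by
      refine hpar_uniq r (by omega) (ι v) ?_ hr2.symm
      rw [hlr]
      exact (hX0 _).mpr ⟨v, rfl⟩
    refine ⟨hlr, hpr.symm, ?_⟩
    rw [hbse_par r (by omega), ← hpr, hbse_iota]
  constructor
  · -- forward direction
    rintro ⟨x, hx0, hxeig⟩
    have hx : ∀ w, ∑ u ∈ Gbig.neighborFinset w, x u = lam * x w :=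
      (mulVec_eq_smul_iff' Gbig x lam).mp hxeig
    -- key recursion on tree vertices
    have hstep : ∀ k, ∀ w, 1 ≤ lvl w → lvl w + k = ℓ →
        a (k + 1) lam * x w = a k lam * x (par w) := by
      intro k
      induction k with
      | zero =>
        intro w h1 h2
        have hthis := hx w
        rw [hN1 w h1, Finset.sum_insert (hpar_notin w h1)] at hthis
        have he : (X (lvl w + 1)).filter (fun u => Gbig.Adj w u) = ∅ := by
          rw [show lvl w + 1 = ℓ + 1 by omega, hXtop, Finset.filter_empty]
        rw [he, Finset.sum_empty, add_zero] at hthis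
        rw [ha1, ha0]
        linarith
      | succ k ih =>
        intro w h1 h2
        have hwl : lvl w < ℓ := by omega
        have hthis := hx w
        rw [hN1 w h1, Finset.sum_insert (hpar_notin w h1)] at hthis
        have hch : ∀ c ∈ (X (lvl w + 1)).filter (fun u => Gbig.Adj w u),
            x c = a k lam / a (k + 1) lam * x w := by
          intro c hc
          obtain ⟨hl, hpc, -⟩ := hchild_facts w h1 hwl c hc
          have hrec := ih c (by omega) (by omega)
          rw [hpc] at hrec
          have hne := hane (k + 1)
          field_simp
          linear_combination hrec
        rw [Finset.sum_congr rfl hch, Finset.sum_const,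
          hchild (lvl w) h1 hwl w (hlvl_mem w), nsmul_eq_mul] at hthis
        have hcast : ((d - 1 : ℕ) : ℝ) = (d : ℝ) - 1 := by
          have : 1 ≤ d := by omega
          push_cast [this]
          ring
        rw [hcast] at hthis
        rw [harec]
        have hne := hane (k + 1)
        field_simp at hthis
        nlinarith [hthis]
    -- the restriction
    set y : V → ℝ := fun v => x (ι v) with hydef
    have hyeq : ∀ v, ∑ u ∈ G'.neighborFinset v, y u
        = (lam - s * a (ℓ - 1) lam / a ℓ lam) * y v := by
      intro v
      have hthis := hx (ι v)
      rw [hN0 v, Finset.sum_union (hdisj01 v),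
        Finset.sum_image (fun b _ c _ h => ι.injective h)] at hthis
      have hr : ∀ r ∈ (X 1).filter (fun u => Gbig.Adj (ι v) u),
          x r = a (ℓ - 1) lam / a ℓ lam * x (ι v) := by
        intro r hr
        obtain ⟨hl, hpr, -⟩ := hroot_facts v r hr
        have hrec := hstep (ℓ - 1) r (by omega) (by omega)
        rw [hpr, show ℓ - 1 + 1 = ℓ by omega] at hrec
        have hne := hane ℓ
        field_simp
        linarith
      rw [Finset.sum_congr rfl hr, Finset.sum_const, hroots v, nsmul_eq_mul] at hthis
      have hne := hane ℓ
      field_simp at hthis ⊢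
      linarith
    refine ⟨y, ?_, (mulVec_eq_smul_iff' G' y _).mpr hyeq⟩
    -- y ≠ 0
    by_contra hy0
    have hy0' : ∀ v : V, x (ι v) = 0 := fun v => congrFun hy0 v
    have hzero : ∀ k w, lvl w = k → x w = 0 := by
      intro k
      induction k with
      | zero =>
        intro w h
        obtain ⟨v, rfl⟩ : ∃ v : V, ι v = w := by
          apply (hX0 w).mp
          rw [← h]
          exact hlvl_mem w
        exact hy0' v
      | succ k ih =>
        intro w h
        have h1 : 1 ≤ lvl w := by omega
        have hp0 : x (par w) = 0 := ih (par w) (by have := hlvl_par w h1; omega)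
        have hrec := hstep (ℓ - (k + 1)) w h1 (by have := hlvl_le w; omega)
        rw [hp0, mul_zero] at hrec
        exact (mul_eq_zero.mp hrec).resolve_left (hane _)
    apply hx0
    funext w
    exact hzero (lvl w) w rfl

  · -- backward direction
    rintro ⟨y, hy0, hyeig⟩
    have hy : ∀ v, ∑ u ∈ G'.neighborFinset v, y u = (lam - s * a (ℓ - 1) lam / a ℓ lam) * y v :=
      (mulVec_eq_smul_iff' G' y _).mp hyeig
    set x : W → ℝ := fun w => a (ℓ - lvl w) lam * y (bse w) with hxdef
    refine ⟨x, ?_, ?_⟩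
    · -- x ≠ 0
      obtain ⟨v, hv⟩ := Function.ne_iff.mp hy0
      apply Function.ne_iff.mpr
      refine ⟨ι v, ?_⟩
      have : x (ι v) = a ℓ lam * y v := by
        rw [hxdef]
        simp only [hlvl_iota, hbse_iota, Nat.sub_zero]
      rw [this]
      simp only [Pi.zero_apply]
      exact mul_ne_zero (hane ℓ) hv
    · -- eigen equation
      rw [mulVec_eq_smul_iff']
      intro w
      rcases Nat.eq_zero_or_pos (lvl w) with h0 | h1
      · -- base vertex
        obtain ⟨v, rfl⟩ : ∃ v : V, ι v = w := by
          apply (hX0 w).mp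
          rw [← h0]
          exact hlvl_mem w
        rw [hN0 v, Finset.sum_union (hdisj01 v),
          Finset.sum_image (fun b _ c _ h => ι.injective h)]
        have e1 : ∀ b ∈ G'.neighborFinset v, x (ι b) = a ℓ lam * y b := by
          intro b _
          rw [hxdef]
          simp only [hlvl_iota, hbse_iota, Nat.sub_zero]
        have e2 : ∀ r ∈ (X 1).filter (fun u => Gbig.Adj (ι v) u),
            x r = a (ℓ - 1) lam * y v := by
          intro r hr
          obtain ⟨hl, -, hb⟩ := hroot_facts v r hr
          rw [hxdef]
          simp only [hl, hb]
        rw [Finset.sum_congr rfl e1, Finset.sum_congr rfl e2, ← Finset.mul_sum, hy v,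
          Finset.sum_const, hroots v, nsmul_eq_mul]
        have e3 : x (ι v) = a ℓ lam * y v := by
          rw [hxdef]; simp only [hlvl_iota, hbse_iota, Nat.sub_zero]
        rw [e3]
        have hne := hane ℓ
        field_simp
        ring
      · -- tree vertex
        rw [hN1 w h1, Finset.sum_insert (hpar_notin w h1)]
        have epar : x (par w) = a (ℓ - lvl w + 1) lam * y (bse w) := by
          rw [hxdef]
          simp only [hlvl_par w h1, ← hbse_par w h1]
          congr 2
          have := hlvl_le w
          omega
        by_cases hc : lvl w = ℓ
        · -- leaf
          have : (X (lvl w + 1)).filter (fun u => Gbig.Adj w u) = ∅ := by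
            rw [hc, hXtop, Finset.filter_empty]
          rw [this, Finset.sum_empty, epar, hc]
          have hx1 : x w = a 0 lam * y (bse w) := by
            rw [hxdef]; simp only [hc, Nat.sub_self]
          rw [hx1, Nat.sub_self, ha0, ha1]
          ring
        · -- internal vertex
          have hwl : lvl w < ℓ := lt_of_le_of_ne (hlvl_le w) hc
          have e2 : ∀ c ∈ (X (lvl w + 1)).filter (fun u => Gbig.Adj w u),
              x c = a (ℓ - lvl w - 1) lam * y (bse w) := by
            intro c hc'
            obtain ⟨hl, -, hb⟩ := hchild_facts w h1 hwl c hc'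
            rw [hxdef]
            simp only [hl, hb]
            congr 2
          rw [Finset.sum_congr rfl e2, Finset.sum_const,
            hchild (lvl w) h1 hwl w (hlvl_mem w), nsmul_eq_mul, epar]
          have hxw : x w = a (ℓ - lvl w) lam * y (bse w) := rfl
          rw [hxw]
          have hrec := harec (ℓ - lvl w - 1) lam
          have e4 : ℓ - lvl w - 1 + 2 = ℓ - lvl w + 1 := by omega
          have e5 : ℓ - lvl w - 1 + 1 = ℓ - lvl w := by omega
          rw [e4, e5] at hrec
          have hcast : ((d - 1 : ℕ) : ℝ) = (d : ℝ) - 1 := by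
            have : 1 ≤ d := by omega
            push_cast [this]
            ring
          rw [hcast, hrec]
          ring
end

section
/- Fix integers d ≥ 3, ℓ ≥ 2, s ≥ 0 and a connected graph G' with largest eigenvalue μ₁. The equation λ − s·a_{ℓ−1}(λ)/a_ℓ(λ) = μ₁ has at most one solution λ > 2√(d−1). -/
open scoped RealInnerProductSpace
open Matrix

/-- for a connected graph `G'` with largest eigenvalue `μ₁`, the equation
`λ - s·a_{ℓ-1}(λ)/a_ℓ(λ) = μ₁` has at most one solution `λ > 2√(d-1)`. -/
theorem augmentation_equation_unique_solution
    {V : Type*} [Fintype V] [DecidableEq V]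
    (d s ℓ : ℕ) (hd : 3 ≤ d) (hℓ : 2 ≤ ℓ)
    (G' : SimpleGraph V) (hG'c : G'.Connected)
    (a : ℕ → ℝ → ℝ)
    (ha0 : ∀ lam, a 0 lam = 1) (ha1 : ∀ lam, a 1 lam = lam)
    (harec : ∀ i lam, a (i + 2) lam = lam * a (i + 1) lam - (d - 1) * a i lam) :
    ∀ x y : ℝ, 2 * Real.sqrt (d - 1) < x → 2 * Real.sqrt (d - 1) < y →
      x - s * a (ℓ - 1) x / a ℓ x = adjEig G' 0 →
      y - s * a (ℓ - 1) y / a ℓ y = adjEig G' 0 →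
      x = y := by
  obtain ⟨m, rfl⟩ : ∃ m, ℓ = m + 1 := ⟨ℓ - 1, by omega⟩
  simp only [Nat.add_sub_cancel]
  set c := Real.sqrt ((d : ℝ) - 1) with hc
  have hd1 : (2 : ℝ) ≤ (d : ℝ) - 1 := by
    have : (3 : ℝ) ≤ (d : ℝ) := by exact_mod_cast hd
    linarith
  have hc0 : 0 < c := Real.sqrt_pos.mpr (by linarith)
  have hcsq : c * c = (d : ℝ) - 1 := Real.mul_self_sqrt (by linarith)
  -- positivity and growth of a i lam for lam > 2c
  have key : ∀ lam : ℝ, 2 * c < lam → ∀ i, 0 < a i lam ∧ c * a i lam < a (i + 1) lam := by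
    intro lam hlam i
    induction i with
    | zero =>
      refine ⟨by rw [ha0]; norm_num, ?_⟩
      rw [ha0, ha1]; linarith
    | succ n ih =>
      obtain ⟨h1, h2⟩ := ih
      have hpos : 0 < a (n + 1) lam := lt_trans (by positivity) h2
      refine ⟨hpos, ?_⟩
      rw [harec]
      have h3 : c * (c * a n lam) < c * a (n + 1) lam := by
        exact mul_lt_mul_of_pos_left h2 hc0
      have h4 : 0 < (lam - 2 * c) * a (n + 1) lam := mul_pos (by linarith) hpos
      nlinarith [hcsq]
  -- strict monotonicity of the lhs function
  have main : ∀ u v : ℝ, 2 * c < u → 2 * c < v → u < v →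
      u - s * a m u / a (m + 1) u < v - s * a m v / a (m + 1) v := by
    intro u v hu hv huv
    have mono : ∀ i, a (i + 1) u * a i v ≤ a i u * a (i + 1) v := by
      intro i
      induction i with
      | zero => simp only [ha0, ha1]; nlinarith
      | succ n ih =>
        rw [harec n u, harec n v]
        have pu : 0 < a (n + 1) u :=
          lt_trans (mul_pos hc0 (key u hu n).1) (key u hu n).2
        have pv : 0 < a (n + 1) v :=
          lt_trans (mul_pos hc0 (key v hv n).1) (key v hv n).2
        have t2 : 0 ≤ ((d : ℝ) - 1) * (a n u * a (n + 1) v - a (n + 1) u * a n v) :=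
          mul_nonneg (by linarith) (by linarith [ih])
        have t3 : 0 < (v - u) * (a (n + 1) u * a (n + 1) v) :=
          mul_pos (by linarith) (mul_pos pu pv)
        nlinarith [t2, t3]
    have pu : 0 < a (m + 1) u :=
      lt_trans (mul_pos hc0 (key u hu m).1) (key u hu m).2
    have pv : 0 < a (m + 1) v :=
      lt_trans (mul_pos hc0 (key v hv m).1) (key v hv m).2
    have gle : a m v / a (m + 1) v ≤ a m u / a (m + 1) u := by
      rw [div_le_div_iff₀ pv pu]
      nlinarith [mono m]
    have hs : (0 : ℝ) ≤ (s : ℝ) := Nat.cast_nonneg s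
    have hsg : (s : ℝ) * (a m v / a (m + 1) v) ≤ (s : ℝ) * (a m u / a (m + 1) u) :=
      mul_le_mul_of_nonneg_left gle hs
    rw [mul_div_assoc, mul_div_assoc]
    linarith
  intro x y hx hy hfx hfy
  rcases lt_trichotomy x y with h | h | h
  · exact absurd (hfx.trans hfy.symm) (ne_of_lt (main x y hx hy h))
  · exact h
  · exact absurd (hfy.trans hfx.symm) (ne_of_lt (main y x hy hx h))
end

section
/- Fix integers d ≥ 3, s ≥ 1, ℓ ≥ 2, a real ε ≥ 0, and a graph G' whose second largest eigenvalue is strictly less than 2√(d−1+ε) − s/(√(d−1+ε) + √ε). Let G be obtained from G' by attaching s disjoint (d−1)-ary trees with ℓ levels to every vertex of G' (joining each root by an edge). Then the second largest eigenvalue of G is less than 2√(d−1+ε). -/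
open scoped RealInnerProductSpace
open Matrix

section Spectral
variable {n : ℕ} (A : Matrix (Fin n) (Fin n) ℝ) (hA : A.IsHermitian)

lemma matEig_one_le_zero (hn : 2 ≤ n) : matEig A hA 1 ≤ matEig A hA 0 := by
  have h1 : (1:ℕ) < n := by omega
  have h0 : (0:ℕ) < n := by omega
  rw [matEig, matEig, dif_pos h1, dif_pos h0]
  exact Tuple.monotone_sort hA.eigenvalues (by simp [Fin.le_def, Fin.rev]; omega)

lemma spec_pair (hn : 2 ≤ n) :
    ∃ x₁ x₂ : Fin n → ℝ,
      (∑ i, x₁ i * x₁ i) = 1 ∧ (∑ i, x₂ i * x₂ i) = 1 ∧ (∑ i, x₁ i * x₂ i) = 0 ∧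
      A *ᵥ x₁ = matEig A hA 0 • x₁ ∧ A *ᵥ x₂ = matEig A hA 1 • x₂ := by
  have h1 : (1:ℕ) < n := by omega
  have h0 : (0:ℕ) < n := by omega
  set σ := Tuple.sort hA.eigenvalues
  set i0 := σ (Fin.rev ⟨0, h0⟩)
  set i1 := σ (Fin.rev ⟨1, h1⟩)
  have hne : i0 ≠ i1 := by
    simp only [i0, i1]
    intro h
    have := σ.injective h
    rw [Fin.rev_inj] at this
    simp [Fin.ext_iff] at this
  refine ⟨hA.eigenvectorBasis i0, hA.eigenvectorBasis i1, ?_, ?_, ?_, ?_, ?_⟩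
  · have h := orthonormal_iff_ite.mp hA.eigenvectorBasis.orthonormal i0 i0
    rw [PiLp.inner_apply] at h
    simpa [RCLike.inner_apply, mul_comm, sq] using h
  · have h := orthonormal_iff_ite.mp hA.eigenvectorBasis.orthonormal i1 i1
    rw [PiLp.inner_apply] at h
    simpa [RCLike.inner_apply, mul_comm, sq] using h
  · have h := orthonormal_iff_ite.mp hA.eigenvectorBasis.orthonormal i0 i1
    rw [PiLp.inner_apply] at h
    simpa [RCLike.inner_apply, hne, mul_comm] using h
  · rw [matEig, dif_pos h0]; exact hA.mulVec_eigenvectorBasis i0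
  · rw [matEig, dif_pos h1]; exact hA.mulVec_eigenvectorBasis i1

lemma eig_index_unique (hn : 2 ≤ n) {i j : Fin n}
    (hi : matEig A hA 1 < hA.eigenvalues i) (hj : matEig A hA 1 < hA.eigenvalues j) : i = j := by
  have h1 : (1:ℕ) < n := by omega
  set σ := Tuple.sort hA.eigenvalues
  have key : ∀ k : Fin n, matEig A hA 1 < hA.eigenvalues k → (σ.symm k : ℕ) = n - 1 := by
    intro k hk
    rw [matEig, dif_pos h1] at hk
    by_contra hne
    have hle : σ.symm k ≤ Fin.rev ⟨1, h1⟩ := by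
      have := (σ.symm k).isLt
      simp [Fin.le_def, Fin.rev]
      omega
    have := Tuple.monotone_sort hA.eigenvalues hle
    simp only [Function.comp_apply, Equiv.apply_symm_apply, σ] at this
    exact absurd hk (not_lt.mpr this)
  have hki := key i hi
  have hkj := key j hj
  have : σ.symm i = σ.symm j := Fin.ext (by omega)
  exact σ.symm.injective this

lemma coeff_zero {μ : ℝ} {v : Fin n → ℝ} (hAv : A *ᵥ v = μ • v) (i : Fin n)
    (hne : hA.eigenvalues i ≠ μ) : (⇑(hA.eigenvectorBasis i)) ⬝ᵥ v = 0 := by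
  have hsym : Aᵀ = A := hA
  have h1 : (⇑(hA.eigenvectorBasis i)) ⬝ᵥ (A *ᵥ v) = (A *ᵥ ⇑(hA.eigenvectorBasis i)) ⬝ᵥ v := by
    rw [dotProduct_mulVec, ← mulVec_transpose, hsym]
  rw [hAv, hA.mulVec_eigenvectorBasis, dotProduct_smul, smul_dotProduct] at h1
  have h2 : (μ - hA.eigenvalues i) * ((⇑(hA.eigenvectorBasis i)) ⬝ᵥ v) = 0 := by
    simp only [smul_eq_mul] at h1; ring_nf; ring_nf at h1; linarith [h1]
  rcases mul_eq_zero.mp h2 with h | h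
  · exact absurd (by linarith : hA.eigenvalues i = μ) hne
  · exact h

lemma expand_eig (hn : 2 ≤ n) {μ : ℝ} {v : Fin n → ℝ} (hv : v ≠ 0) (hAv : A *ᵥ v = μ • v)
    (hμ : matEig A hA 1 < μ) :
    ∃ i : Fin n, matEig A hA 1 < hA.eigenvalues i ∧
      ((⇑(hA.eigenvectorBasis i)) ⬝ᵥ v ≠ 0) ∧
      ∀ k, v k = ((⇑(hA.eigenvectorBasis i)) ⬝ᵥ v) * (hA.eigenvectorBasis i) k := by
  classical
  set b := hA.eigenvectorBasis with hb
  have hrepr : ∀ (x : Fin n → ℝ) (k : Fin n),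
      x k = ∑ i, ((⇑(b i)) ⬝ᵥ x) * (b i) k := by
    intro x k
    set X : EuclideanSpace ℝ (Fin n) := WithLp.toLp 2 x with hX
    have h := b.sum_repr' X
    calc x k = (∑ i, ⟪b i, X⟫ • b i) k := by rw [h]
      _ = ∑ i, ((⇑(b i)) ⬝ᵥ x) * (b i) k := by
          rw [WithLp.ofLp_sum, Finset.sum_apply]
          refine Finset.sum_congr rfl fun i _ => ?_
          have h2 : ⟪b i, X⟫ = (⇑(b i)) ⬝ᵥ x := by
            simp [PiLp.inner_apply, RCLike.inner_apply, dotProduct, hX, mul_comm]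
          rw [h2, PiLp.smul_apply, smul_eq_mul]
  have hex : ∃ i, (⇑(b i)) ⬝ᵥ v ≠ 0 := by
    by_contra hall
    push_neg at hall
    apply hv
    funext k
    have := hrepr v k
    simpa [hall] using this
  obtain ⟨i, hi⟩ := hex
  have heig : hA.eigenvalues i = μ := by
    by_contra hne
    exact hi (coeff_zero A hA hAv i hne)
  refine ⟨i, heig ▸ hμ, hi, ?_⟩
  intro k
  have h := hrepr v k
  rw [h, Finset.sum_eq_single i]
  · intro j _ hji
    have hz : (⇑(b j)) ⬝ᵥ v = 0 := by
      by_contra hnz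
      have heigj : hA.eigenvalues j = μ := by
        by_contra hne
        exact hnz (coeff_zero A hA hAv j hne)
      exact hji (eig_index_unique A hA hn (heigj ▸ hμ) (heig ▸ hμ))
    rw [hz, zero_mul]
  · intro hnotin; exact absurd (Finset.mem_univ i) hnotin

end Spectral

lemma adjEig_eq {V : Type*} [Fintype V] [DecidableEq V] (G : SimpleGraph V)
    [inst : DecidableRel G.Adj] (k : ℕ) :
    adjEig G k = matEig ((G.adjMatrix ℝ).submatrix (Fintype.equivFin V).symm
      (Fintype.equivFin V).symm) (adj_isHermitian G) k := by
  unfold adjEig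
  exact matEig_congr (by ext i j; simp [Matrix.submatrix_apply, SimpleGraph.adjMatrix_apply]) _ _ _

lemma submatrix_mulVec_eig {n : ℕ} {W : Type*} [Fintype W] [DecidableEq W]
    (M : Matrix W W ℝ) (e : W ≃ Fin n) (x : Fin n → ℝ) (μ : ℝ)
    (h : M.submatrix e.symm e.symm *ᵥ x = μ • x) :
    M *ᵥ (x ∘ e) = μ • (x ∘ e) := by
  funext w
  have hw := congrFun h (e w)
  simp only [mulVec, submatrix_apply, Equiv.symm_apply_apply, Pi.smul_apply,
    Function.comp_apply, smul_eq_mul] at hw ⊢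
  rw [← hw]
  simp only [Function.comp_apply, dotProduct]
  exact (Fintype.sum_equiv e.symm _ _ (fun j => by simp)).symm

lemma mulVec_eig_submatrix {n : ℕ} {W : Type*} [Fintype W] [DecidableEq W]
    (M : Matrix W W ℝ) (e : W ≃ Fin n) (g : W → ℝ) (μ : ℝ)
    (h : M *ᵥ g = μ • g) :
    M.submatrix e.symm e.symm *ᵥ (g ∘ e.symm) = μ • (g ∘ e.symm) := by
  funext i
  have hw := congrFun h (e.symm i)
  simp only [mulVec, submatrix_apply, Pi.smul_apply, smul_eq_mul, Function.comp_apply] at hw ⊢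
  rw [← hw]
  simp only [dotProduct]
  exact Fintype.sum_equiv e.symm _ _ (fun j => by simp)

lemma sum_reindex {n : ℕ} {W : Type*} [Fintype W] [DecidableEq W] (e : W ≃ Fin n)
    (x y : Fin n → ℝ) : ∑ i, x i * y i = ∑ w, x (e w) * y (e w) :=
  (Fintype.sum_equiv e _ _ (fun _ => rfl)).symm

noncomputable def tseq (d : ℕ) (lam : ℝ) : ℕ → ℝ
  | 0 => 1 / lam
  | k+1 => 1 / (lam - ((d:ℝ) - 1) * tseq d lam k)

lemma tseq_bounds (d : ℕ) (hd : 3 ≤ d) (ε : ℝ) (hε : 0 ≤ ε) (lam : ℝ)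
    (hlam : 2 * Real.sqrt ((d:ℝ) - 1 + ε) ≤ lam) (k : ℕ) :
    0 < tseq d lam k ∧ tseq d lam k ≤ (Real.sqrt ((d:ℝ) - 1 + ε) + Real.sqrt ε)⁻¹ := by
  set Q := Real.sqrt ((d:ℝ) - 1 + ε) with hQ
  set R := Real.sqrt ε with hR
  have hd1 : (2:ℝ) ≤ (d:ℝ) - 1 := by
    have : (3:ℝ) ≤ (d:ℝ) := by exact_mod_cast hd
    linarith
  have hQ2 : Q ^ 2 = (d:ℝ) - 1 + ε := Real.sq_sqrt (by linarith)
  have hR2 : R ^ 2 = ε := Real.sq_sqrt hε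
  have hQpos : 0 < Q := Real.sqrt_pos.mpr (by linarith)
  have hRnn : 0 ≤ R := Real.sqrt_nonneg _
  have hRQ : R ≤ Q := Real.sqrt_le_sqrt (by linarith)
  have hQR : 0 < Q + R := by linarith
  have hkey : ((d:ℝ) - 1) * (Q + R)⁻¹ = Q - R := by
    have h2 : ((d:ℝ) - 1) = (Q - R) * (Q + R) := by nlinarith [hQ2, hR2]
    rw [h2, mul_inv_cancel_right₀ (ne_of_gt hQR)]
  induction k with
  | zero =>
      have hlampos : 0 < lam := by linarith
      constructor
      · simp [tseq]; positivity
      · simp only [tseq]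
        rw [one_div, inv_le_inv₀ hlampos hQR]
        linarith
  | succ k ih =>
      obtain ⟨h1, h2⟩ := ih
      have hden : Q + R ≤ lam - ((d:ℝ) - 1) * tseq d lam k := by
        have : ((d:ℝ) - 1) * tseq d lam k ≤ ((d:ℝ) - 1) * (Q + R)⁻¹ := by
          apply mul_le_mul_of_nonneg_left h2 (by linarith)
        rw [hkey] at this
        linarith
      have hdenpos : 0 < lam - ((d:ℝ) - 1) * tseq d lam k := by linarith
      constructor
      · simp only [tseq]; positivity
      · simp only [tseq]
        rw [one_div, inv_le_inv₀ hdenpos hQR]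
        exact hden

lemma tseq_den_pos (d : ℕ) (hd : 3 ≤ d) (ε : ℝ) (hε : 0 ≤ ε) (lam : ℝ)
    (hlam : 2 * Real.sqrt ((d:ℝ) - 1 + ε) ≤ lam) (k : ℕ) :
    0 < lam - ((d:ℝ) - 1) * tseq d lam k := by
  set Q := Real.sqrt ((d:ℝ) - 1 + ε) with hQ
  set R := Real.sqrt ε with hR
  have hd1 : (2:ℝ) ≤ (d:ℝ) - 1 := by
    have : (3:ℝ) ≤ (d:ℝ) := by exact_mod_cast hd
    linarith
  have hQ2 : Q ^ 2 = (d:ℝ) - 1 + ε := Real.sq_sqrt (by linarith)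
  have hR2 : R ^ 2 = ε := Real.sq_sqrt hε
  have hQpos : 0 < Q := Real.sqrt_pos.mpr (by linarith)
  have hRnn : 0 ≤ R := Real.sqrt_nonneg _
  have hRQ : R ≤ Q := Real.sqrt_le_sqrt (by linarith)
  have hQR : 0 < Q + R := by linarith
  have hkey : ((d:ℝ) - 1) * (Q + R)⁻¹ = Q - R := by
    have h2 : ((d:ℝ) - 1) = (Q - R) * (Q + R) := by nlinarith [hQ2, hR2]
    rw [h2, mul_inv_cancel_right₀ (ne_of_gt hQR)]
  obtain ⟨h1, h2⟩ := tseq_bounds d hd ε hε lam hlam k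
  have : ((d:ℝ) - 1) * tseq d lam k ≤ ((d:ℝ) - 1) * (Q + R)⁻¹ :=
    mul_le_mul_of_nonneg_left h2 (by linarith)
  rw [hkey] at this
  linarith
set_option maxHeartbeats 2000000 in
/-- if `λ₂(G') < 2√(d-1+ε) - s/(√(d-1+ε)+√ε)` then the tree augmentation
`G = T_s^ℓ(d) G'` (attach `s` disjoint `(d-1)`-ary trees with `ℓ` levels to every vertex)
satisfies `λ₂(G) < 2√(d-1+ε)`. -/
theorem tree_augmentation_second_eigenvalue
    {V W : Type*} [Fintype V] [DecidableEq V] [Fintype W] [DecidableEq W]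
    (d s ℓ : ℕ) (hd : 3 ≤ d) (hs : 1 ≤ s) (hℓ : 2 ≤ ℓ)
    (hV : 1 < Fintype.card V) (hW : 1 < Fintype.card W)
    (ε : ℝ) (hε : 0 ≤ ε)
    (G' : SimpleGraph V) [DecidableRel G'.Adj]
    (Gbig : SimpleGraph W) [DecidableRel Gbig.Adj]
    (ι : V ↪ W) (X : ℕ → Finset W)
    (hX0 : ∀ w : W, w ∈ X 0 ↔ ∃ a : V, ι a = w)
    (hcover : ∀ w : W, ∃ i ≤ ℓ, w ∈ X i)
    (hdisj : ∀ i j, i ≤ ℓ → j ≤ ℓ → i ≠ j → Disjoint (X i) (X j))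
    (hbase : ∀ a b : V, Gbig.Adj (ι a) (ι b) ↔ G'.Adj a b)
    (hbase_nbrs : ∀ (a : V) (w : W), Gbig.Adj (ι a) w → (∃ b : V, ι b = w) ∨ w ∈ X 1)
    (hroots : ∀ a : V, ((X 1).filter (fun w => Gbig.Adj (ι a) w)).card = s)
    (hchild : ∀ i, 1 ≤ i → i < ℓ → ∀ u ∈ X i,
        ((X (i + 1)).filter (fun w => Gbig.Adj u w)).card = d - 1)
    (hparent : ∀ i, 1 ≤ i → i ≤ ℓ → ∀ u ∈ X i, ∃! p, p ∈ X (i - 1) ∧ Gbig.Adj u p)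
    (hnbrs : ∀ i, 1 ≤ i → i ≤ ℓ → ∀ u ∈ X i, ∀ w, Gbig.Adj u w → w ∈ X (i - 1) ∪ X (i + 1))
    (hXtop : X (ℓ + 1) = ∅)
    (hsecond : adjEig G' 1 <
      2 * Real.sqrt (d - 1 + ε) - s / (Real.sqrt (d - 1 + ε) + Real.sqrt ε)) :
    adjEig Gbig 1 < 2 * Real.sqrt (d - 1 + ε) := by
  classical
  by_contra hcon
  push_neg at hcon
  set Q := Real.sqrt ((d:ℝ) - 1 + ε) with hQdef
  set R := Real.sqrt ε with hRdef
  have hd1 : (2:ℝ) ≤ (d:ℝ) - 1 := by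
    have : (3:ℝ) ≤ (d:ℝ) := by exact_mod_cast hd
    linarith
  have hQpos : 0 < Q := Real.sqrt_pos.mpr (by linarith)
  have hRnn : 0 ≤ R := Real.sqrt_nonneg _
  have hQR : 0 < Q + R := by linarith
  -- matrix setup for Gbig
  set eW := Fintype.equivFin W with heWdef
  set A : Matrix (Fin (Fintype.card W)) (Fin (Fintype.card W)) ℝ :=
    (Gbig.adjMatrix ℝ).submatrix eW.symm eW.symm with hAdef
  have hA : A.IsHermitian := adj_isHermitian Gbig
  have hnW : 2 ≤ Fintype.card W := hW
  have hcon' : 2 * Q ≤ matEig A hA 1 := by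
    rw [adjEig_eq Gbig 1] at hcon
    exact hcon
  obtain ⟨x₁, x₂, hx₁, hx₂, hortho, hv1, hv2⟩ := spec_pair A hA hnW
  set lam₁ := matEig A hA 0 with hl1def
  set lam₂ := matEig A hA 1 with hl2def
  have hθ2 : 2 * Q ≤ lam₂ := hcon'
  have hθ1 : 2 * Q ≤ lam₁ := le_trans hθ2 (matEig_one_le_zero A hA hnW)
  set f₁ : W → ℝ := x₁ ∘ eW with hf1def
  set f₂ : W → ℝ := x₂ ∘ eW with hf2def
  have hf₁ : ∀ w, ∑ u ∈ Gbig.neighborFinset w, f₁ u = lam₁ * f₁ w := by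
    intro w
    have h := congrFun (submatrix_mulVec_eig (Gbig.adjMatrix ℝ) eW x₁ lam₁ hv1) w
    rw [SimpleGraph.adjMatrix_mulVec_apply] at h
    simpa [hf1def] using h
  have hf₂ : ∀ w, ∑ u ∈ Gbig.neighborFinset w, f₂ u = lam₂ * f₂ w := by
    intro w
    have h := congrFun (submatrix_mulVec_eig (Gbig.adjMatrix ℝ) eW x₂ lam₂ hv2) w
    rw [SimpleGraph.adjMatrix_mulVec_apply] at h
    simpa [hf2def] using h
  -- the tree recursion
  have key : ∀ (f : W → ℝ) (lam : ℝ), 2 * Q ≤ lam →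
      (∀ w, ∑ u ∈ Gbig.neighborFinset w, f u = lam * f w) →
      ∀ k i, i + k = ℓ → 1 ≤ i → ∀ u ∈ X i, ∀ p, p ∈ X (i-1) → Gbig.Adj u p →
        f u = tseq d lam k * f p := by
    intro f lam hlam hf k
    have hlampos : 0 < lam := by linarith
    induction k with
    | zero =>
        intro i hiℓ hi1 u hu p hp hadj
        have hXi : X (i + 1) = ∅ := by rw [show i + 1 = ℓ + 1 by omega]; exact hXtop
        obtain ⟨q, ⟨hq, hqadj⟩, huniq⟩ := hparent i (by omega) (by omega) u hu
        have hnb : Gbig.neighborFinset u = {p} := by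
          ext w
          simp only [SimpleGraph.mem_neighborFinset, Finset.mem_singleton]
          constructor
          · intro hw
            have hmem := hnbrs i (by omega) (by omega) u hu w hw
            rw [hXi, Finset.union_empty] at hmem
            rw [huniq w ⟨hmem, hw⟩, ← huniq p ⟨hp, hadj⟩]
          · rintro rfl; exact hadj
        have h := hf u
        rw [hnb, Finset.sum_singleton] at h
        have : f u = 1 / lam * f p := by
          field_simp
          linarith [h]
        simpa [tseq] using this
    | succ k ih =>
        intro i hiℓ hi1 u hu p hp hadj
        have hiltℓ : i < ℓ := by omega
        set C := (X (i+1)).filter (fun w => Gbig.Adj u w) with hCdef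
        have hpnotC : p ∉ C := by
          intro hpC
          have hp1 : p ∈ X (i+1) := (Finset.mem_filter.mp hpC).1
          exact (Finset.disjoint_left.mp
            (hdisj (i-1) (i+1) (by omega) (by omega) (by omega)) hp) hp1
        have hnb : Gbig.neighborFinset u = insert p C := by
          ext w
          simp only [SimpleGraph.mem_neighborFinset, Finset.mem_insert]
          constructor
          · intro hw
            have hmem := hnbrs i (by omega) (by omega) u hu w hw
            rcases Finset.mem_union.mp hmem with h1 | h2
            · obtain ⟨q, ⟨hq, hqadj⟩, huniq⟩ := hparent i (by omega) (by omega) u hu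
              left
              rw [huniq w ⟨h1, hw⟩, ← huniq p ⟨hp, hadj⟩]
            · right; exact Finset.mem_filter.mpr ⟨h2, hw⟩
          · rintro (rfl | hwC)
            · exact hadj
            · exact (Finset.mem_filter.mp hwC).2
        have hsum := hf u
        rw [hnb, Finset.sum_insert hpnotC] at hsum
        have hCval : ∀ c ∈ C, f c = tseq d lam k * f u := by
          intro c hc
          obtain ⟨hc1, hc2⟩ := Finset.mem_filter.mp hc
          exact ih (i+1) (by omega) (by omega) c hc1 u (by simpa using hu) hc2.symm
        have hCsum : ∑ c ∈ C, f c = ((d:ℝ) - 1) * (tseq d lam k * f u) := by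
          rw [Finset.sum_congr rfl hCval, Finset.sum_const, nsmul_eq_mul]
          have hcard : C.card = d - 1 := hchild i (by omega) hiltℓ u hu
          rw [hcard]
          have : ((d - 1 : ℕ) : ℝ) = (d:ℝ) - 1 := by
            have : 1 ≤ d := by omega
            push_cast [this]
            ring
          rw [this]
        rw [hCsum] at hsum
        have hden : 0 < lam - ((d:ℝ) - 1) * tseq d lam k :=
          tseq_den_pos d hd ε hε lam hlam k
        have : f u * (lam - ((d:ℝ) - 1) * tseq d lam k) = f p := by ring_nf; ring_nf at hsum; linarith
        show f u = tseq d lam (k+1) * f p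
        rw [← this]
        simp only [tseq]
        field_simp
  -- base equation
  have base : ∀ (f : W → ℝ) (lam : ℝ), 2 * Q ≤ lam →
      (∀ w, ∑ u ∈ Gbig.neighborFinset w, f u = lam * f w) →
      ∀ a : V, ∑ b ∈ G'.neighborFinset a, f (ι b)
        = (lam - (s:ℝ) * tseq d lam (ℓ-1)) * f (ι a) := by
    intro f lam hlam hf a
    set Rset := (X 1).filter (fun w => Gbig.Adj (ι a) w) with hRsetdef
    have himsub : ∀ w ∈ (G'.neighborFinset a).image ι, w ∈ X 0 := by
      intro w hw
      obtain ⟨b, _, rfl⟩ := Finset.mem_image.mp hw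
      exact (hX0 (ι b)).mpr ⟨b, rfl⟩
    have hdisj01 : Disjoint ((G'.neighborFinset a).image ι) Rset := by
      apply Finset.disjoint_left.mpr
      intro w hw hwR
      have h0 : w ∈ X 0 := himsub w hw
      have h1 : w ∈ X 1 := (Finset.mem_filter.mp hwR).1
      exact (Finset.disjoint_left.mp (hdisj 0 1 (by omega) (by omega) (by omega)) h0) h1
    have hnb : Gbig.neighborFinset (ι a) = ((G'.neighborFinset a).image ι) ∪ Rset := by
      ext w
      simp only [SimpleGraph.mem_neighborFinset, Finset.mem_union]
      constructor
      · intro hw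
        rcases hbase_nbrs a w hw with ⟨b, rfl⟩ | hw1
        · left
          exact Finset.mem_image.mpr ⟨b, SimpleGraph.mem_neighborFinset _ _ _ |>.mpr
            ((hbase a b).mp hw), rfl⟩
        · right; exact Finset.mem_filter.mpr ⟨hw1, hw⟩
      · intro hw
        rcases hw with hw | hw
        · obtain ⟨b, hb, rfl⟩ := Finset.mem_image.mp hw
          exact (hbase a b).mpr (SimpleGraph.mem_neighborFinset _ _ _ |>.mp hb)
        · exact (Finset.mem_filter.mp hw).2
    have hsum := hf (ι a)
    rw [hnb, Finset.sum_union hdisj01] at hsum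
    have himg : ∑ w ∈ (G'.neighborFinset a).image ι, f w = ∑ b ∈ G'.neighborFinset a, f (ι b) := by
      rw [Finset.sum_image (fun x _ y _ h => ι.injective h)]
    have hRval : ∀ r ∈ Rset, f r = tseq d lam (ℓ-1) * f (ι a) := by
      intro r hr
      obtain ⟨hr1, hr2⟩ := Finset.mem_filter.mp hr
      exact key f lam hlam hf (ℓ-1) 1 (by omega) le_rfl r hr1 (ι a)
        (by simpa using (hX0 (ι a)).mpr ⟨a, rfl⟩) hr2.symm
    have hRsum : ∑ r ∈ Rset, f r = (s:ℝ) * (tseq d lam (ℓ-1) * f (ι a)) := by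
      rw [Finset.sum_congr rfl hRval, Finset.sum_const, nsmul_eq_mul, hroots a]
    rw [himg, hRsum] at hsum
    linarith [hsum]
  -- nonvanishing of restriction
  have gnz : ∀ (f : W → ℝ) (lam : ℝ), 2 * Q ≤ lam →
      (∀ w, ∑ u ∈ Gbig.neighborFinset w, f u = lam * f w) →
      f ≠ 0 → ∃ a : V, f (ι a) ≠ 0 := by
    intro f lam hlam hf hfne
    by_contra hall
    push_neg at hall
    apply hfne
    have hlevel : ∀ i, i ≤ ℓ → ∀ u ∈ X i, f u = 0 := by
      intro i
      induction i with
      | zero =>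
          intro _ u hu
          obtain ⟨a, rfl⟩ := (hX0 u).mp hu
          exact hall a
      | succ i ih =>
          intro hle u hu
          obtain ⟨p, ⟨hp, hadj⟩, _⟩ := hparent (i+1) (by omega) hle u hu
          have hp' : p ∈ X i := by simpa using hp
          have := key f lam hlam hf (ℓ - (i+1)) (i+1) (by omega) (by omega) u hu p hp hadj
          rw [this, ih (by omega) p hp', mul_zero]
    funext w
    obtain ⟨i, hi, hw⟩ := hcover w
    exact hlevel i hi w hw
  -- eigenvalue bound for the pushed-down eigenvalue
  have hμbound : ∀ lam : ℝ, 2 * Q ≤ lam →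
      adjEig G' 1 < lam - (s:ℝ) * tseq d lam (ℓ-1) := by
    intro lam hlam
    obtain ⟨ht1, ht2⟩ := tseq_bounds d hd ε hε lam hlam (ℓ-1)
    have hsle : (s:ℝ) * tseq d lam (ℓ-1) ≤ (s:ℝ) * (Q + R)⁻¹ :=
      mul_le_mul_of_nonneg_left ht2 (by positivity)
    have hdiv : (s:ℝ) / (Q + R) = (s:ℝ) * (Q + R)⁻¹ := div_eq_mul_inv _ _
    calc adjEig G' 1 < 2 * Q - (s:ℝ) / (Q + R) := hsecond
      _ ≤ lam - (s:ℝ) * tseq d lam (ℓ-1) := by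
          rw [hdiv]
          linarith [hsle, hlam]
  -- matrix setup for G'
  set eV := Fintype.equivFin V with heVdef
  set A' : Matrix (Fin (Fintype.card V)) (Fin (Fintype.card V)) ℝ :=
    (G'.adjMatrix ℝ).submatrix eV.symm eV.symm with hA'def
  have hA' : A'.IsHermitian := adj_isHermitian G'
  have hnV : 2 ≤ Fintype.card V := hV
  have hmatEigG' : adjEig G' 1 = matEig A' hA' 1 := adjEig_eq G' 1
  -- push down the two eigenvectors
  set g₁ : V → ℝ := fun a => f₁ (ι a) with hg1def
  set g₂ : V → ℝ := fun a => f₂ (ι a) with hg2def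
  set μ₁ := lam₁ - (s:ℝ) * tseq d lam₁ (ℓ-1) with hmu1def
  set μ₂ := lam₂ - (s:ℝ) * tseq d lam₂ (ℓ-1) with hmu2def
  have hf1ne : f₁ ≠ 0 := by
    intro hzero
    rw [show x₁ = f₁ ∘ eW.symm by funext i; simp [hf1def], hzero] at hx₁
    simp at hx₁
  have hf2ne : f₂ ≠ 0 := by
    intro hzero
    rw [show x₂ = f₂ ∘ eW.symm by funext i; simp [hf2def], hzero] at hx₂
    simp at hx₂
  obtain ⟨a₁, ha₁⟩ := gnz f₁ lam₁ hθ1 hf₁ hf1ne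
  obtain ⟨a₂, ha₂⟩ := gnz f₂ lam₂ hθ2 hf₂ hf2ne
  have hAg₁ : G'.adjMatrix ℝ *ᵥ g₁ = μ₁ • g₁ := by
    funext a
    rw [SimpleGraph.adjMatrix_mulVec_apply]
    have := base f₁ lam₁ hθ1 hf₁ a
    simpa [hg1def, hmu1def] using this
  have hAg₂ : G'.adjMatrix ℝ *ᵥ g₂ = μ₂ • g₂ := by
    funext a
    rw [SimpleGraph.adjMatrix_mulVec_apply]
    have := base f₂ lam₂ hθ2 hf₂ a
    simpa [hg2def, hmu2def] using this
  set y₁ : Fin (Fintype.card V) → ℝ := g₁ ∘ eV.symm with hy1def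
  set y₂ : Fin (Fintype.card V) → ℝ := g₂ ∘ eV.symm with hy2def
  have hAy₁ : A' *ᵥ y₁ = μ₁ • y₁ := mulVec_eig_submatrix _ eV g₁ μ₁ hAg₁
  have hAy₂ : A' *ᵥ y₂ = μ₂ • y₂ := mulVec_eig_submatrix _ eV g₂ μ₂ hAg₂
  have hy1ne : y₁ ≠ 0 := by
    intro h
    apply ha₁
    have := congrFun h (eV a₁)
    simpa [hy1def, hg1def] using this
  have hy2ne : y₂ ≠ 0 := by
    intro h
    apply ha₂
    have := congrFun h (eV a₂)
    simpa [hy2def, hg2def] using this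
  have hμ₁gt : matEig A' hA' 1 < μ₁ := by rw [← hmatEigG']; exact hμbound lam₁ hθ1
  have hμ₂gt : matEig A' hA' 1 < μ₂ := by rw [← hmatEigG']; exact hμbound lam₂ hθ2
  obtain ⟨i₁, hei₁, hc₁, hrep₁⟩ := expand_eig A' hA' hnV hy1ne hAy₁ hμ₁gt
  obtain ⟨i₂, hei₂, hc₂, hrep₂⟩ := expand_eig A' hA' hnV hy2ne hAy₂ hμ₂gt
  have hii : i₁ = i₂ := eig_index_unique A' hA' hnV hei₁ hei₂
  subst hii
  set c₁ := (⇑(hA'.eigenvectorBasis i₁)) ⬝ᵥ y₁ with hc1def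
  set c₂ := (⇑(hA'.eigenvectorBasis i₁)) ⬝ᵥ y₂ with hc2def
  set c : ℝ := c₂ / c₁ with hcdef
  have hcne : c ≠ 0 := div_ne_zero hc₂ hc₁
  have hg21 : ∀ a : V, g₂ a = c * g₁ a := by
    intro a
    have h1 := hrep₁ (eV a)
    have h2 := hrep₂ (eV a)
    have hy1a : y₁ (eV a) = g₁ a := by simp [hy1def]
    have hy2a : y₂ (eV a) = g₂ a := by simp [hy2def]
    rw [hy1a] at h1
    rw [hy2a] at h2
    rw [h2, h1, hcdef]
    field_simp
  -- level sums
  set S : ℕ → ℝ := fun i => ∑ u ∈ X i, f₁ u * f₂ u with hSdef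
  have hX0eq : X 0 = Finset.univ.image ι := by
    ext w
    simp only [Finset.mem_image, Finset.mem_univ, true_and]
    exact hX0 w
  have hS0 : S 0 = c * ∑ a : V, g₁ a * g₁ a := by
    simp only [hSdef]
    rw [hX0eq, Finset.sum_image (fun x _ y _ h => ι.injective h), Finset.mul_sum]
    refine Finset.sum_congr rfl fun a _ => ?_
    have := hg21 a
    simp only [hg1def, hg2def] at this ⊢
    rw [this]
    ring
  have hsumsq : 0 < ∑ a : V, g₁ a * g₁ a := by
    apply Finset.sum_pos' (fun a _ => mul_self_nonneg _)
    exact ⟨a₁, Finset.mem_univ _, mul_self_pos.mpr ha₁⟩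
  have hS0ne : S 0 ≠ 0 := by
    rw [hS0]
    exact mul_ne_zero hcne (ne_of_gt hsumsq)
  have hstep : ∀ i, 1 ≤ i → i ≤ ℓ → ∃ q : ℝ, 0 < q ∧ S i = q * S (i-1) := by
    intro i h1 h2
    set t₁ := tseq d lam₁ (ℓ - i) with ht1def
    set t₂ := tseq d lam₂ (ℓ - i) with ht2def
    have ht₁pos : 0 < t₁ := (tseq_bounds d hd ε hε lam₁ hθ1 (ℓ - i)).1
    have ht₂pos : 0 < t₂ := (tseq_bounds d hd ε hε lam₂ hθ2 (ℓ - i)).1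
    have hterm : ∀ u ∈ X i, f₁ u * f₂ u
        = (t₁ * t₂) * ∑ v ∈ (X (i-1)).filter (fun v => Gbig.Adj u v), f₁ v * f₂ v := by
      intro u hu
      obtain ⟨p, ⟨hp, hadj⟩, huniq⟩ := hparent i h1 h2 u hu
      have hfilter : (X (i-1)).filter (fun v => Gbig.Adj u v) = {p} := by
        ext v
        simp only [Finset.mem_filter, Finset.mem_singleton]
        constructor
        · rintro ⟨hv, ha⟩; exact huniq v ⟨hv, ha⟩
        · rintro rfl; exact ⟨hp, hadj⟩
      rw [hfilter, Finset.sum_singleton,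
        key f₁ lam₁ hθ1 hf₁ (ℓ-i) i (by omega) h1 u hu p hp hadj,
        key f₂ lam₂ hθ2 hf₂ (ℓ-i) i (by omega) h1 u hu p hp hadj]
      ring
    have hswap : S i = (t₁ * t₂) * ∑ v ∈ X (i-1),
        (((X i).filter (fun u => Gbig.Adj v u)).card : ℝ) * (f₁ v * f₂ v) := by
      simp only [hSdef]
      rw [Finset.sum_congr rfl hterm, ← Finset.mul_sum]
      congr 1
      have hsum1 : ∀ u ∈ X i, ∑ v ∈ (X (i-1)).filter (fun v => Gbig.Adj u v), f₁ v * f₂ v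
          = ∑ v ∈ X (i-1), if Gbig.Adj u v then f₁ v * f₂ v else 0 := by
        intro u _
        rw [Finset.sum_filter]
      rw [Finset.sum_congr rfl hsum1, Finset.sum_comm]
      refine Finset.sum_congr rfl fun v _ => ?_
      rw [← Finset.sum_filter]
      have hfc : (X i).filter (fun u => Gbig.Adj u v) = (X i).filter (fun u => Gbig.Adj v u) := by
        apply Finset.filter_congr
        intro u _
        simp [SimpleGraph.adj_comm]
      rw [hfc]
      rw [Finset.sum_const, nsmul_eq_mul]
    rcases Nat.eq_or_lt_of_le h1 with h1' | h1'
    · -- i = 1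
      have hieq : i = 1 := h1'.symm
      subst hieq
      refine ⟨t₁ * t₂ * (s:ℝ), by positivity, ?_⟩
      rw [hswap]
      have hcard : ∀ v ∈ X 0, (((X 1).filter (fun u => Gbig.Adj v u)).card : ℝ) = (s:ℝ) := by
        intro v hv
        obtain ⟨a, rfl⟩ := (hX0 v).mp hv
        rw [hroots a]
      calc (t₁ * t₂) * ∑ v ∈ X 0, (((X 1).filter (fun u => Gbig.Adj v u)).card : ℝ) * (f₁ v * f₂ v)
          = (t₁ * t₂) * ∑ v ∈ X 0, (s:ℝ) * (f₁ v * f₂ v) := by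
            congr 1
            exact Finset.sum_congr rfl fun v hv => by rw [hcard v hv]
        _ = t₁ * t₂ * (s:ℝ) * S 0 := by
            simp only [hSdef]
            rw [← Finset.mul_sum]
            ring
        _ = t₁ * t₂ * (s:ℝ) * S (1-1) := by norm_num
    · -- 2 ≤ i
      have hdm1 : ((d - 1 : ℕ) : ℝ) = (d:ℝ) - 1 := by
        have h1d : 1 ≤ d := by omega
        push_cast [h1d]
        ring
      refine ⟨t₁ * t₂ * ((d:ℝ) - 1), mul_pos (mul_pos ht₁pos ht₂pos) (by linarith), ?_⟩
      rw [hswap]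
      have hcard : ∀ v ∈ X (i-1), (((X i).filter (fun u => Gbig.Adj v u)).card : ℝ) = (d:ℝ) - 1 := by
        intro v hv
        have := hchild (i-1) (by omega) (by omega) v hv
        rw [show (i-1)+1 = i by omega] at this
        rw [this, hdm1]
      calc (t₁ * t₂) * ∑ v ∈ X (i-1), (((X i).filter (fun u => Gbig.Adj v u)).card : ℝ) * (f₁ v * f₂ v)
          = (t₁ * t₂) * ∑ v ∈ X (i-1), ((d:ℝ)-1) * (f₁ v * f₂ v) := by
            congr 1
            exact Finset.sum_congr rfl fun v hv => by rw [hcard v hv]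
        _ = t₁ * t₂ * ((d:ℝ)-1) * S (i-1) := by
            simp only [hSdef]
            rw [← Finset.mul_sum]
            ring
  have hSall : ∀ i, i ≤ ℓ → ∃ q : ℝ, 0 < q ∧ S i = q * S 0 := by
    intro i
    induction i with
    | zero => intro _; exact ⟨1, one_pos, (one_mul _).symm⟩
    | succ i ih =>
        intro hle
        obtain ⟨q', hq', hSq'⟩ := hstep (i+1) (by omega) hle
        obtain ⟨q, hq, hSq⟩ := ih (by omega)
        refine ⟨q' * q, by positivity, ?_⟩
        rw [show (i+1)-1 = i by omega] at hSq'
        rw [hSq', hSq]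
        ring
  -- total sum is zero by orthogonality
  have hzero : ∑ w, f₁ w * f₂ w = 0 := by
    have h := sum_reindex eW x₁ x₂
    simp only [hf1def, hf2def, Function.comp_apply]
    rw [← h]
    exact hortho
  have hpart : ∑ w, f₁ w * f₂ w = ∑ i ∈ Finset.range (ℓ+1), S i := by
    have huniv : (Finset.univ : Finset W) = (Finset.range (ℓ+1)).biUnion X := by
      ext w
      simp only [Finset.mem_univ, Finset.mem_biUnion, Finset.mem_range, true_iff]
      obtain ⟨i, hi, hw⟩ := hcover w
      exact ⟨i, by omega, hw⟩
    rw [huniv, Finset.sum_biUnion]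
    intro i hi j hj hij
    simp only [Finset.coe_range, Set.mem_Iio] at hi hj
    exact hdisj i j (by omega) (by omega) hij
  -- contradiction
  have hposmul : 0 < (∑ i ∈ Finset.range (ℓ+1), S i) * S 0 := by
    rw [Finset.sum_mul]
    apply Finset.sum_pos
    · intro i hi
      obtain ⟨q, hq, hSq⟩ := hSall i (by have := Finset.mem_range.mp hi; omega)
      rw [hSq]
      have : 0 < S 0 * S 0 := by
        rcases lt_or_gt_of_ne hS0ne with h | h
        · nlinarith
        · nlinarith
      nlinarith
    · exact ⟨0, Finset.mem_range.mpr (by omega)⟩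
  rw [← hpart, hzero] at hposmul
  simp at hposmul
end
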